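/- arXiv:1106.3269 — 3 statements merged into one kernel-verified Lean document; each statement's English description precedes it below -/
import Mathlib

section
/- Stability of the backward step: assume in addition that f is uniformly Lipschitz in its second variable with constant K, i.e. |f(x,ξ₂) − f(x,ξ₁)| ≤ K|ξ₂ − ξ₁| for all x ∈ [0,1] and ξ₁, ξ₂ ≥ 0. Then for every ν > 0 there exists C > 0 (depending only on ν, T, σ, K, ‖u_T‖_∞, ‖f‖_∞, ‖m_0‖_∞) such that for all integers I, J ≥ 1 with 1/Δt > 1 + (K/σ²)·max(‖exp(u_T/σ²)‖²_∞, ‖m_0‖²_∞/ε²) + ν, the following holds for every n ∈ ℕ: for every ψ̃ ∈ M_0 and every φ̃ ∈ M_ε with φ̃_{I,j} = exp(u_T(x_j)/σ²) for all j, defining the residual η̃_{i,j} := (φ̃_{i+1,j} − φ̃_{i,j})/Δt + (σ²/2)(φ̃_{i,j+1} − 2φ̃_{i,j} + φ̃_{i,j-1})/(Δx)² + (1/σ²) f(x_j, φ̃_{i,j} ψ̃_{i,j}) φ̃_{i,j} for 0 ≤ i ≤ I−1, 0 ≤ j ≤ J (and η̃_{I,j} := 0), one has ‖φ̂^{n+1/2}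 − φ̃‖² ≤ C‖ψ̂ⁿ − ψ̃‖² + C‖η̃‖², where φ̂^{n+1/2}, ψ̂ⁿ are the scheme iterates. -/
noncomputable section

open Real Filter

/-- Sup of `|g|` over `[0,1]` (the sup norm `‖g‖_∞`). -/
def supIcc (g : ℝ → ℝ) : ℝ := ⨆ x : Set.Icc (0:ℝ) 1, |g (x : ℝ)|

/-- Sup of `|f|` over `[0,1] × ℝ` (the sup norm `‖f‖_∞`). -/
def supF (f : ℝ → ℝ → ℝ) : ℝ := ⨆ p : Set.Icc (0:ℝ) 1 × ℝ, |f (p.1 : ℝ) p.2|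

/-- Membership in `M_ε`: all grid entries (for `i ≤ I`, `j ≤ J`) are at least `ε`. -/
def MemM (I J : ℕ) (ε : ℝ) (m : ℕ → ℕ → ℝ) : Prop :=
  ∀ i ≤ I, ∀ j ≤ J, ε ≤ m i j

/-- The discrete backward scheme `(Ê_φ)` with data `ψ`.  Here `Δt = T/I`, `Δx = 1/J`,
`x_j = j/J`, and the Neumann conventions `m_{i,-1} = m_{i,0}`, `m_{i,J+1} = m_{i,J}`
are realized by the clamped indices `j - 1` (truncated `ℕ`-subtraction) and `min (j+1) J`. -/
def BScheme (T σ : ℝ) (I J : ℕ) (f : ℝ → ℝ → ℝ) (uT : ℝ → ℝ)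
    (ψ φ : ℕ → ℕ → ℝ) : Prop :=
  (∀ i < I, ∀ j ≤ J,
      (φ (i+1) j - φ i j) / (T / (I:ℝ))
        + σ^2 / 2 * ((φ i (min (j+1) J) - 2 * φ i j + φ i (j-1)) / (1/(J:ℝ))^2)
      = -(1/σ^2) * f ((j:ℝ)/(J:ℝ)) (φ i j * ψ i j) * φ i j)
  ∧ ∀ j ≤ J, φ I j = Real.exp (uT ((j:ℝ)/(J:ℝ)) / σ^2)

/-- The discrete forward scheme `(Ê_ψ)` with data `φ` (same conventions as `BScheme`). -/
def FScheme (T σ : ℝ) (I J : ℕ) (f : ℝ → ℝ → ℝ) (m0 : ℝ → ℝ)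
    (φ ψ : ℕ → ℕ → ℝ) : Prop :=
  (∀ i < I, ∀ j ≤ J,
      (ψ (i+1) j - ψ i j) / (T / (I:ℝ))
        - σ^2 / 2 * ((ψ (i+1) (min (j+1) J) - 2 * ψ (i+1) j + ψ (i+1) (j-1)) / (1/(J:ℝ))^2)
      = (1/σ^2) * f ((j:ℝ)/(J:ℝ)) (φ (i+1) j * ψ (i+1) j) * ψ (i+1) j)
  ∧ ∀ j ≤ J, ψ 0 j = m0 ((j:ℝ)/(J:ℝ)) / φ 0 j

/-- Squared grid norm `‖m‖² = max_{0 ≤ i ≤ I} (1/(J+1)) Σ_{j=0}^{J} m_{i,j}²`. -/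
def gnormSq (I J : ℕ) (m : ℕ → ℕ → ℝ) : ℝ :=
  (Finset.range (I+1)).sup' (Finset.nonempty_range_iff.mpr (Nat.succ_ne_zero I))
    (fun i => (1/((J:ℝ)+1)) * ∑ j ∈ Finset.range (J+1), (m i j)^2)

/-- Grid norm `‖m‖`. -/
def gnorm (I J : ℕ) (m : ℕ → ℕ → ℝ) : ℝ := Real.sqrt (gnormSq I J m)

/- ### Auxiliary lemmas -/

private lemma down_induct {I : ℕ} {Q : ℕ → Prop} (hI : Q I)
    (hstep : ∀ i < I, Q (i+1) → Q i) : ∀ i ≤ I, Q i := by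
  have key : ∀ d i, i + d = I → Q i := by
    intro d
    induction d with
    | zero => intro i h; simpa [← h] using hI
    | succ d ih => intro i h; exact hstep i (by omega) (ih (i+1) (by omega))
  intro i hi; exact key (I - i) i (by omega)

private lemma lap_sum (J : ℕ) (e : ℕ → ℝ) :
    ∑ j ∈ Finset.range (J+1), (e (min (j+1) J) - 2 * e j + e (j-1)) * e j
      = -∑ j ∈ Finset.range J, (e (j+1) - e j)^2 := by
  induction J with
  | zero =>
    norm_num
    exact Or.inl (by ring)
  | succ J ih =>
    have hc : ∑ j ∈ Finset.range J, (e (min (j+1) (J+1)) - 2*e j + e (j-1)) * e j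
        = ∑ j ∈ Finset.range J, (e (min (j+1) J) - 2*e j + e (j-1)) * e j :=
      Finset.sum_congr rfl (fun j hj => by
        have hj' : j < J := Finset.mem_range.mp hj
        rw [min_eq_left (show j+1 ≤ J+1 by omega), min_eq_left (show j+1 ≤ J by omega)])
    rw [Finset.sum_range_succ (f := fun j => (e (min (j+1) (J+1)) - 2*e j + e (j-1)) * e j),
      Finset.sum_range_succ (f := fun j => (e (min (j+1) (J+1)) - 2*e j + e (j-1)) * e j),
      Finset.sum_range_succ (f := fun j => (e (j+1) - e j)^2), hc]
    rw [Finset.sum_range_succ (f := fun j => (e (min (j+1) J) - 2*e j + e (j-1)) * e j)] at ih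
    rw [min_eq_right (le_refl (J+1)), min_eq_right (show J+1 ≤ J+1+1 by omega)]
    rw [min_eq_right (show J ≤ J+1 by omega)] at ih
    have h2 : J + 1 - 1 = J := by omega
    rw [h2]
    linear_combination ih

private lemma xj_mem {J j : ℕ} (hJ : 1 ≤ J) (hj : j ≤ J) :
    ((j:ℝ)/(J:ℝ)) ∈ Set.Icc (0:ℝ) 1 := by
  have hJ0 : (0:ℝ) < (J:ℝ) := by exact_mod_cast hJ
  constructor
  · positivity
  · rw [div_le_one hJ0]; exact_mod_cast hj

private lemma phi_bounds {T σ : ℝ} (hT : 0 < T) (hσ : 0 < σ) {I J : ℕ} (hI : 1 ≤ I) (hJ : 1 ≤ J)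
    {f : ℝ → ℝ → ℝ} {uT : ℝ → ℝ} {ψ φ : ℕ → ℕ → ℝ}
    (hfneg : ∀ x ∈ Set.Icc (0:ℝ) 1, ∀ ξ : ℝ, f x ξ ≤ 0)
    {Cφ : ℝ} (hCφ : ∀ j ≤ J, Real.exp (uT ((j:ℝ)/(J:ℝ)) / σ^2) ≤ Cφ)
    (hs : BScheme T σ I J f uT ψ φ) :
    ∀ i ≤ I, ∀ j ≤ J, 0 ≤ φ i j ∧ φ i j ≤ Cφ := by
  have hΔt : 0 < T/(I:ℝ) := div_pos hT (by exact_mod_cast hI)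
  have hCφ0 : 0 < Cφ := lt_of_lt_of_le (Real.exp_pos _) (hCφ 0 (by omega))
  refine down_induct (fun j hj => ?_) (fun i hi hQ => ?_)
  · rw [hs.2 j hj]
    exact ⟨(Real.exp_pos _).le, hCφ j hj⟩
  · obtain ⟨jm, hjm, hmin⟩ := Finset.exists_min_image (Finset.range (J+1)) (φ i)
      ⟨0, Finset.mem_range.mpr (by omega)⟩
    obtain ⟨jM, hjM, hmax⟩ := Finset.exists_max_image (Finset.range (J+1)) (φ i)
      ⟨0, Finset.mem_range.mpr (by omega)⟩
    have hjm' : jm ≤ J := by simpa using Nat.lt_succ_iff.mp (Finset.mem_range.mp hjm)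
    have hjM' : jM ≤ J := by simpa using Nat.lt_succ_iff.mp (Finset.mem_range.mp hjM)
    have hmin' : ∀ j ≤ J, φ i jm ≤ φ i j := fun j hj =>
      hmin j (Finset.mem_range.mpr (by omega))
    have hmax' : ∀ j ≤ J, φ i j ≤ φ i jM := fun j hj =>
      hmax j (Finset.mem_range.mpr (by omega))
    have hmem : ∀ j ≤ J, min (j+1) J ≤ J ∧ j - 1 ≤ J := fun j hj => ⟨min_le_right _ _, by omega⟩
    have hlow : 0 ≤ φ i jm := by
      by_contra hneg
      push_neg at hneg
      have eq := hs.1 i hi jm hjm'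
      have hlap : 0 ≤ φ i (min (jm+1) J) - 2 * φ i jm + φ i (jm-1) := by
        have h1 := hmin' _ (hmem jm hjm').1
        have h2 := hmin' _ (hmem jm hjm').2
        linarith
      have hf := hfneg _ (xj_mem hJ hjm') (φ i jm * ψ i jm)
      have hJ2 : (0:ℝ) < (1/(J:ℝ))^2 := by
        have : (0:ℝ) < (J:ℝ) := by exact_mod_cast hJ
        positivity
      have hrhs : -(1/σ^2) * f ((jm:ℝ)/(J:ℝ)) (φ i jm * ψ i jm) * φ i jm ≤ 0 := by
        have h1 : (0:ℝ) < 1/σ^2 := by positivity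
        nlinarith [mul_nonneg (mul_nonneg h1.le (neg_nonneg.mpr hf)) (neg_nonneg.mpr hneg.le)]
      have hlap2 : 0 ≤ σ^2/2 * ((φ i (min (jm+1) J) - 2 * φ i jm + φ i (jm-1)) / (1/(J:ℝ))^2) := by
        apply mul_nonneg (by positivity)
        exact div_nonneg hlap hJ2.le
      have hstep2 : (φ (i+1) jm - φ i jm) / (T/(I:ℝ)) ≤ 0 := by linarith
      have : φ (i+1) jm - φ i jm ≤ 0 := by
        by_contra hpos
        push_neg at hpos
        have := div_pos hpos hΔt
        linarith
      have := (hQ jm hjm').1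
      linarith
    have hup : φ i jM ≤ Cφ := by
      by_contra hgt
      push_neg at hgt
      have hMpos : 0 < φ i jM := lt_trans hCφ0 hgt
      have eq := hs.1 i hi jM hjM'
      have hlap : φ i (min (jM+1) J) - 2 * φ i jM + φ i (jM-1) ≤ 0 := by
        have h1 := hmax' _ (hmem jM hjM').1
        have h2 := hmax' _ (hmem jM hjM').2
        linarith
      have hf := hfneg _ (xj_mem hJ hjM') (φ i jM * ψ i jM)
      have hJ2 : (0:ℝ) < (1/(J:ℝ))^2 := by
        have : (0:ℝ) < (J:ℝ) := by exact_mod_cast hJ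
        positivity
      have hrhs : 0 ≤ -(1/σ^2) * f ((jM:ℝ)/(J:ℝ)) (φ i jM * ψ i jM) * φ i jM := by
        have h1 : (0:ℝ) < 1/σ^2 := by positivity
        nlinarith [mul_nonneg (mul_nonneg h1.le (neg_nonneg.mpr hf)) hMpos.le]
      have hlap2 : σ^2/2 * ((φ i (min (jM+1) J) - 2 * φ i jM + φ i (jM-1)) / (1/(J:ℝ))^2) ≤ 0 := by
        apply mul_nonpos_of_nonneg_of_nonpos (by positivity)
        exact div_nonpos_of_nonpos_of_nonneg hlap hJ2.le
      have hstep2 : 0 ≤ (φ (i+1) jM - φ i jM) / (T/(I:ℝ)) := by linarith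
      have : 0 ≤ φ (i+1) jM - φ i jM := by
        by_contra hpos
        push_neg at hpos
        have := div_neg_of_neg_of_pos hpos hΔt
        linarith
      have := (hQ jM hjM').2
      linarith
    exact fun j hj => ⟨le_trans hlow (hmin' j hj), le_trans (hmax' j hj) hup⟩

private lemma psi_nonneg {T σ : ℝ} (hT : 0 < T) (hσ : 0 < σ) {I J : ℕ} (hI : 1 ≤ I) (hJ : 1 ≤ J)
    {f : ℝ → ℝ → ℝ} {m0 : ℝ → ℝ} {φ ψ : ℕ → ℕ → ℝ}
    (hfneg : ∀ x ∈ Set.Icc (0:ℝ) 1, ∀ ξ : ℝ, f x ξ ≤ 0)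
    (hinit : ∀ j ≤ J, 0 ≤ ψ 0 j)
    (hs : FScheme T σ I J f m0 φ ψ) :
    ∀ i ≤ I, ∀ j ≤ J, 0 ≤ ψ i j := by
  have hΔt : 0 < T/(I:ℝ) := div_pos hT (by exact_mod_cast hI)
  intro i
  induction i with
  | zero => intro _ j hj; exact hinit j hj
  | succ i ih =>
    intro hi j hj
    have hi' : i < I := by omega
    have prev : ∀ j ≤ J, 0 ≤ ψ i j := ih (by omega)
    obtain ⟨jm, hjm, hmin⟩ := Finset.exists_min_image (Finset.range (J+1)) (ψ (i+1))
      ⟨0, Finset.mem_range.mpr (by omega)⟩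
    have hjm' : jm ≤ J := Nat.lt_succ_iff.mp (Finset.mem_range.mp hjm)
    have hmin' : ∀ j ≤ J, ψ (i+1) jm ≤ ψ (i+1) j := fun j hj =>
      hmin j (Finset.mem_range.mpr (by omega))
    suffices h : 0 ≤ ψ (i+1) jm from le_trans h (hmin' j hj)
    by_contra hneg
    push_neg at hneg
    have eq := hs.1 i hi' jm hjm'
    have hlap : 0 ≤ ψ (i+1) (min (jm+1) J) - 2 * ψ (i+1) jm + ψ (i+1) (jm-1) := by
      have h1 := hmin' _ (min_le_right (jm+1) J)
      have h2 := hmin' (jm-1) (by omega)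
      linarith
    have hf := hfneg _ (xj_mem hJ hjm') (φ (i+1) jm * ψ (i+1) jm)
    have hJ2 : (0:ℝ) < (1/(J:ℝ))^2 := by
      have : (0:ℝ) < (J:ℝ) := by exact_mod_cast hJ
      positivity
    have hrhs : 0 ≤ (1/σ^2) * f ((jm:ℝ)/(J:ℝ)) (φ (i+1) jm * ψ (i+1) jm) * ψ (i+1) jm := by
      have h1 : (0:ℝ) < 1/σ^2 := by positivity
      nlinarith [mul_nonneg (mul_nonneg h1.le (neg_nonneg.mpr hf)) (neg_nonneg.mpr hneg.le)]
    have hlap2 : 0 ≤ σ^2/2 * ((ψ (i+1) (min (jm+1) J) - 2 * ψ (i+1) jm + ψ (i+1) (jm-1)) / (1/(J:ℝ))^2) :=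
      mul_nonneg (by positivity) (div_nonneg hlap hJ2.le)
    have hstep2 : 0 ≤ (ψ (i+1) jm - ψ i jm) / (T/(I:ℝ)) := by linarith
    have h3 : 0 ≤ ψ (i+1) jm - ψ i jm := by
      by_contra hpos
      push_neg at hpos
      have := div_neg_of_neg_of_pos hpos hΔt
      linarith
    have := prev jm hjm'
    linarith

private lemma nonlin_bound {g : ℝ → ℝ} (hgneg : ∀ ξ : ℝ, g ξ ≤ 0) (hgmono : Antitone g)
    {K Cφ : ℝ} (hK0 : 0 ≤ K)
    (hK : ∀ ξ₁ ξ₂ : ℝ, 0 ≤ ξ₁ → 0 ≤ ξ₂ → |g ξ₂ - g ξ₁| ≤ K * |ξ₂ - ξ₁|)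
    {a b p q : ℝ} (ha0 : 0 ≤ a) (haC : a ≤ Cφ) (hp : 0 ≤ p) (hq : 0 ≤ q) :
    (g (a*p) * a - g (b*q) * b) * (a - b) ≤ K * Cφ^2 * (|p - q| * |a - b|) := by
  have key : (g (a*p)*a - g (b*q)*b) * (a-b)
      = g (b*q) * (a-b)^2 + (g (a*p) - g (a*q)) * (a * (a-b))
        + (g (a*q) - g (b*q)) * (a * (a-b)) := by ring
  have h1 : g (b*q) * (a-b)^2 ≤ 0 :=
    mul_nonpos_of_nonpos_of_nonneg (hgneg _) (sq_nonneg _)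
  have h3 : (g (a*q) - g (b*q)) * (a * (a-b)) ≤ 0 := by
    rcases le_total a b with hab | hab
    · have := hgmono (mul_le_mul_of_nonneg_right hab hq)
      exact mul_nonpos_of_nonneg_of_nonpos (by linarith)
        (mul_nonpos_of_nonneg_of_nonpos ha0 (by linarith))
    · have := hgmono (mul_le_mul_of_nonneg_right hab hq)
      exact mul_nonpos_of_nonpos_of_nonneg (by linarith)
        (mul_nonneg ha0 (by linarith))
  have h2a : |g (a*p) - g (a*q)| ≤ K * (a * |p - q|) := by
    calc |g (a*p) - g (a*q)| ≤ K * |a*p - a*q| :=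
          hK (a*q) (a*p) (mul_nonneg ha0 hq) (mul_nonneg ha0 hp)
      _ = K * (a * |p - q|) := by rw [← mul_sub, abs_mul, abs_of_nonneg ha0]
  have h2 : (g (a*p) - g (a*q)) * (a * (a-b)) ≤ K * Cφ^2 * (|p - q| * |a - b|) := by
    have hb1 : (g (a*p) - g (a*q)) * (a*(a-b)) ≤ |g (a*p) - g (a*q)| * (a * |a-b|) := by
      calc (g (a*p) - g (a*q)) * (a*(a-b)) ≤ |(g (a*p) - g (a*q)) * (a*(a-b))| := le_abs_self _
        _ = |g (a*p) - g (a*q)| * (a*|a-b|) := by rw [abs_mul, abs_mul, abs_of_nonneg ha0]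
    have hb2 : |g (a*p) - g (a*q)| * (a * |a-b|) ≤ (K * (a * |p-q|)) * (a * |a-b|) :=
      mul_le_mul_of_nonneg_right h2a (mul_nonneg ha0 (abs_nonneg _))
    have hb3 : (K * (a * |p-q|)) * (a * |a-b|) ≤ K * Cφ^2 * (|p - q| * |a - b|) := by
      nlinarith [abs_nonneg (p-q), abs_nonneg (a-b),
        mul_nonneg (abs_nonneg (p-q)) (abs_nonneg (a-b)),
        mul_nonneg hK0 (mul_nonneg (abs_nonneg (p-q)) (abs_nonneg (a-b))),
        sq_nonneg a, mul_le_mul haC haC ha0 (le_trans ha0 haC)]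
    linarith
  linarith [key.le, key.ge]

private lemma scheme_diff (dt s2 J2 a' a an am b' b bn bm F G h : ℝ) (hdt : dt ≠ 0)
    (h1 : (a' - a)/dt + s2/2 * ((an - 2*a + am)/J2) = -(1/s2) * F * a)
    (hη : h = (b' - b)/dt + s2/2*((bn - 2*b + bm)/J2) + (1/s2) * G * b) :
    (a - b) = (a' - b') + dt * (s2/2 * (((an-bn) - 2*(a-b) + (am-bm))/J2)
      + (1/s2)*(F*a - G*b) + h) := by
  have hx : (a'-a)/dt = -(1/s2)*F*a - s2/2*((an-2*a+am)/J2) := by linarith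
  have hy : (b'-b)/dt = h - s2/2*((bn-2*b+bm)/J2) - (1/s2)*G*b := by linarith
  have h1' : a' - a = (-(1/s2)*F*a - s2/2*((an-2*a+am)/J2)) * dt := (div_eq_iff hdt).mp hx
  have hη' : b' - b = (h - s2/2*((bn-2*b+bm)/J2) - (1/s2)*G*b) * dt := (div_eq_iff hdt).mp hy
  linear_combination (-1 : ℝ) * h1' + hη'


private lemma young_sq (x y : ℝ) : x * y ≤ (x^2 + y^2)/2 := by
  nlinarith [sq_nonneg (x - y)]

private lemma young_abs (x y : ℝ) : |x| * |y| ≤ (x^2 + y^2)/2 := by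
  nlinarith [sq_nonneg (|x| - |y|), sq_abs x, sq_abs y]

private lemma pt_bound {dt e e' a2 nl eta Lw : ℝ}
    (hid : e = e' + dt * (a2 + nl + eta))
    (hdt : 0 ≤ dt)
    (hNL : nl * e ≤ Lw) :
    e^2 ≤ e' * e + dt * (a2 * e) + dt * Lw + dt * (eta * e) := by
  have h1 : e^2 = e'*e + dt*(a2*e) + dt*(nl*e) + dt*(eta*e) := by
    calc e^2 = (e' + dt*(a2+nl+eta)) * e := by rw [← hid]; ring
      _ = e'*e + dt*(a2*e) + dt*(nl*e) + dt*(eta*e) := by ring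
  have h2 : dt*(nl*e) ≤ dt*Lw := mul_le_mul_of_nonneg_left hNL hdt
  linarith

set_option maxHeartbeats 1600000 in
theorem stmt_9 (T σ : ℝ) (hT : 0 < T) (hσ : 0 < σ)
    (f : ℝ → ℝ → ℝ) (uT m0 : ℝ → ℝ)
    (hfc : ∀ x ∈ Set.Icc (0:ℝ) 1, Continuous (f x))
    (hfb : ∃ B : ℝ, ∀ x ∈ Set.Icc (0:ℝ) 1, ∀ ξ : ℝ, |f x ξ| ≤ B)
    (hfneg : ∀ x ∈ Set.Icc (0:ℝ) 1, ∀ ξ : ℝ, f x ξ ≤ 0)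
    (hfmono : ∀ x ∈ Set.Icc (0:ℝ) 1, Antitone (f x))
    (huTb : ∃ B : ℝ, ∀ x ∈ Set.Icc (0:ℝ) 1, |uT x| ≤ B)
    (hm0b : ∃ B : ℝ, ∀ x ∈ Set.Icc (0:ℝ) 1, |m0 x| ≤ B)
    (hm0 : ∀ x ∈ Set.Icc (0:ℝ) 1, 0 ≤ m0 x)
    (K : ℝ)
    (hK : ∀ x ∈ Set.Icc (0:ℝ) 1, ∀ ξ₁ ξ₂ : ℝ, 0 ≤ ξ₁ → 0 ≤ ξ₂ →
      |f x ξ₂ - f x ξ₁| ≤ K * |ξ₂ - ξ₁|)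
    (ν : ℝ) (hν : 0 < ν) :
    ∃ C > 0, ∀ I J : ℕ, 1 ≤ I → 1 ≤ J →
      (I:ℝ)/T > 1 + K/σ^2 *
        max ((supIcc fun x => Real.exp (uT x / σ^2))^2)
            ((supIcc m0)^2 / (Real.exp (-(supIcc uT + supF f * T) / σ^2))^2) + ν →
      ∀ Φs Ψs : ℕ → ℕ → ℕ → ℝ,
        (∀ i ≤ I, ∀ j ≤ J, Ψs 0 i j = 0) →
        (∀ m : ℕ, BScheme T σ I J f uT (Ψs m) (Φs m)) →
        (∀ m : ℕ, FScheme T σ I J f m0 (Φs m) (Ψs (m+1))) →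
      ∀ n : ℕ, ∀ ψt φt : ℕ → ℕ → ℝ,
        MemM I J 0 ψt →
        MemM I J (Real.exp (-(supIcc uT + supF f * T) / σ^2)) φt →
        (∀ j ≤ J, φt I j = Real.exp (uT ((j:ℝ)/(J:ℝ)) / σ^2)) →
        gnormSq I J (fun i j => Φs n i j - φt i j)
          ≤ C * gnormSq I J (fun i j => Ψs n i j - ψt i j)
            + C * gnormSq I J (fun i j =>
                if i < I then
                  (φt (i+1) j - φt i j) / (T/(I:ℝ))
                    + σ^2/2 * ((φt i (min (j+1) J) - 2*φt i j + φt i (j-1)) / (1/(J:ℝ))^2)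
                    + (1/σ^2) * f ((j:ℝ)/(J:ℝ)) (φt i j * ψt i j) * φt i j
                else 0) := by
  obtain ⟨Bu, hBu⟩ := huTb
  have hσ2 : (0:ℝ) < σ^2 := by positivity
  have hK0 : 0 ≤ K := by
    have h := hK 0 (by constructor <;> norm_num) 0 1 le_rfl zero_le_one
    norm_num at h
    exact le_trans (abs_nonneg _) h
  set Cφ := supIcc fun x => Real.exp (uT x / σ^2) with hCφd
  set M := max (Cφ^2)
      ((supIcc m0)^2 / (Real.exp (-(supIcc uT + supF f * T) / σ^2))^2) with hMd
  set L := K/σ^2 * M with hLd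
  have hM0 : 0 ≤ M := le_trans (sq_nonneg Cφ) (le_max_left _ _)
  have hL0 : 0 ≤ L := mul_nonneg (div_nonneg hK0 hσ2.le) hM0
  set N := Nat.ceil (2*(L+1)*T) with hNd
  set ρ := max 1 (2*(L+1)/ν) with hρd
  set C := max (Real.exp (2*(L+1)*T)) (ρ^N) with hCd
  have hC0 : 0 < C := lt_of_lt_of_le (Real.exp_pos _) (le_max_left _ _)
  refine ⟨C, hC0, ?_⟩
  intro I J hI hJ hCFL Φs Ψs hΨ0 hBs hFs n ψt φt hψt hφt hterm
  have hI0 : (0:ℝ) < (I:ℝ) := by exact_mod_cast hI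
  have hJ0 : (0:ℝ) < (J:ℝ) := by exact_mod_cast hJ
  have hΔt : (0:ℝ) < T/(I:ℝ) := div_pos hT hI0
  have hJ1 : (0:ℝ) < (J:ℝ)+1 := by linarith
  -- bound for exp(uT/σ²) at grid points
  have hCφj : ∀ j ≤ J, Real.exp (uT ((j:ℝ)/(J:ℝ))/σ^2) ≤ Cφ := by
    intro j hj
    have hb : BddAbove (Set.range fun x : Set.Icc (0:ℝ) 1 => |Real.exp (uT x / σ^2)|) := by
      refine ⟨Real.exp (Bu/σ^2), ?_⟩
      rintro y ⟨x, rfl⟩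
      simp only
      rw [abs_of_pos (Real.exp_pos _)]
      exact Real.exp_le_exp.mpr ((div_le_div_iff_of_pos_right hσ2).mpr
        (le_trans (le_abs_self _) (hBu x x.2)))
    have h := le_ciSup hb (⟨(j:ℝ)/(J:ℝ), xj_mem hJ hj⟩ : Set.Icc (0:ℝ) 1)
    rw [hCφd]
    simp only [supIcc]
    exact le_trans (le_abs_self _) h
  have hCφ2M : Cφ^2 ≤ M := le_max_left _ _
  -- bounds on the scheme iterates
  have hphi : ∀ i ≤ I, ∀ j ≤ J, 0 ≤ Φs n i j ∧ Φs n i j ≤ Cφ :=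
    phi_bounds hT hσ hI hJ hfneg hCφj (hBs n)
  have hpsi : ∀ i ≤ I, ∀ j ≤ J, 0 ≤ Ψs n i j := by
    cases n with
    | zero => exact fun i hi j hj => le_of_eq (hΨ0 i hi j hj).symm
    | succ m =>
      have hphim : ∀ i ≤ I, ∀ j ≤ J, 0 ≤ Φs m i j ∧ Φs m i j ≤ Cφ :=
        phi_bounds hT hσ hI hJ hfneg hCφj (hBs m)
      refine psi_nonneg hT hσ hI hJ hfneg (fun j hj => ?_) (hFs m)
      rw [(hFs m).2 j hj]
      exact div_nonneg (hm0 _ (xj_mem hJ hj)) (hphim 0 (by omega) j hj).1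
  -- abbreviations
  set S : ℕ → ℝ := fun i => ∑ j ∈ Finset.range (J+1), (Φs n i j - φt i j)^2 with hSd
  set W : ℕ → ℝ := fun i => ∑ j ∈ Finset.range (J+1), (Ψs n i j - ψt i j)^2 with hWd
  set η : ℕ → ℕ → ℝ := fun i j =>
      if i < I then
        (φt (i+1) j - φt i j) / (T/(I:ℝ))
          + σ^2/2 * ((φt i (min (j+1) J) - 2*φt i j + φt i (j-1)) / (1/(J:ℝ))^2)
          + (1/σ^2) * f ((j:ℝ)/(J:ℝ)) (φt i j * ψt i j) * φt i j
      else 0 with hηd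
  set H : ℕ → ℝ := fun i => ∑ j ∈ Finset.range (J+1), (η i j)^2 with hHd
  set Bw := gnormSq I J (fun i j => Ψs n i j - ψt i j) with hBwd
  set Bh := gnormSq I J η with hBhd
  have hBw0 : 0 ≤ Bw := by
    rw [hBwd, gnormSq]
    refine le_trans ?_ (Finset.le_sup' _ (Finset.mem_range.mpr (show 0 < I+1 by omega)))
    positivity
  have hBh0 : 0 ≤ Bh := by
    rw [hBhd, gnormSq]
    refine le_trans ?_ (Finset.le_sup' _ (Finset.mem_range.mpr (show 0 < I+1 by omega)))
    positivity
  have hWle : ∀ i ≤ I, W i ≤ ((J:ℝ)+1) * Bw := by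
    intro i hi
    have h2 : (1/((J:ℝ)+1)) * W i ≤ Bw := by
      rw [hBwd]
      exact Finset.le_sup' (fun i => (1/((J:ℝ)+1)) *
          ∑ j ∈ Finset.range (J+1), ((fun i j => Ψs n i j - ψt i j) i j)^2)
        (Finset.mem_range.mpr (show i < I+1 by omega))
    calc W i = ((J:ℝ)+1) * ((1/((J:ℝ)+1)) * W i) := by field_simp
      _ ≤ ((J:ℝ)+1) * Bw := mul_le_mul_of_nonneg_left h2 hJ1.le
  have hHle : ∀ i ≤ I, H i ≤ ((J:ℝ)+1) * Bh := by
    intro i hi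
    have h2 : (1/((J:ℝ)+1)) * H i ≤ Bh := by
      rw [hBhd]
      exact Finset.le_sup' (fun i => (1/((J:ℝ)+1)) *
          ∑ j ∈ Finset.range (J+1), ((fun i j => η i j) i j)^2)
        (Finset.mem_range.mpr (show i < I+1 by omega))
    calc H i = ((J:ℝ)+1) * ((1/((J:ℝ)+1)) * H i) := by field_simp
      _ ≤ ((J:ℝ)+1) * Bh := mul_le_mul_of_nonneg_left h2 hJ1.le
  have hS0 : ∀ i, 0 ≤ S i := fun i => Finset.sum_nonneg (fun j _ => sq_nonneg _)
  have hSI : S I = 0 := by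
    rw [hSd]
    refine Finset.sum_eq_zero (fun j hj => ?_)
    have hj' : j ≤ J := by have := Finset.mem_range.mp hj; omega
    rw [(hBs n).2 j hj', hterm j hj']
    ring
  -- CFL quantities
  have hCFL' : (I:ℝ)/T > 1 + L + ν := hCFL
  set θ : ℝ := 1 - (T/(I:ℝ))*(L+1) with hθd
  have hITdt : (T/(I:ℝ)) * ((I:ℝ)/T) = 1 := by field_simp
  have hθν : ν * (T/(I:ℝ)) < θ := by
    have h := mul_lt_mul_of_pos_left hCFL' hΔt
    rw [hITdt] at h
    rw [hθd]
    nlinarith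
  have hθ0 : (0:ℝ) < θ := lt_trans (mul_pos hν hΔt) hθν
  have hθ1 : θ ≤ 1 := by
    rw [hθd]
    nlinarith [mul_nonneg hΔt.le (show (0:ℝ) ≤ L+1 by linarith)]
  have hr1 : 1 ≤ 1/θ := by rw [le_div_iff₀ hθ0]; linarith
  -- the row energy estimate
  have key : ∀ i < I, S i * θ ≤ S (i+1) + (T/(I:ℝ)) * (L * W i + H i) := by
    intro i hi
    have hi' : i ≤ I := by omega
    have hi1 : i + 1 ≤ I := by omega
    -- pointwise bound
    have hpt : ∀ j ≤ J,
        (Φs n i j - φt i j)^2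
          ≤ (Φs n (i+1) j - φt (i+1) j) * (Φs n i j - φt i j)
            + (T/(I:ℝ)) * ((σ^2/2 * (((Φs n i (min (j+1) J) - φt i (min (j+1) J))
                - 2*(Φs n i j - φt i j) + (Φs n i (j-1) - φt i (j-1))) / (1/(J:ℝ))^2))
                  * (Φs n i j - φt i j))
            + (T/(I:ℝ)) * (L * (|Ψs n i j - ψt i j| * |Φs n i j - φt i j|))
            + (T/(I:ℝ)) * (η i j * (Φs n i j - φt i j)) := by
      intro j hj
      have hx : ((j:ℝ)/(J:ℝ)) ∈ Set.Icc (0:ℝ) 1 := xj_mem hJ hj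
      have h1 := (hBs n).1 i hi j hj
      have hηv : η i j = (φt (i+1) j - φt i j) / (T/(I:ℝ))
          + σ^2/2 * ((φt i (min (j+1) J) - 2*φt i j + φt i (j-1)) / (1/(J:ℝ))^2)
          + (1/σ^2) * f ((j:ℝ)/(J:ℝ)) (φt i j * ψt i j) * φt i j := by
        rw [hηd]
        simp only [if_pos hi]
      have hηv' : η i j = (φt (i+1) j - φt i j) / (T/(I:ℝ))
          + σ^2/2 * ((φt i (min (j+1) J) - 2*φt i j + φt i (j-1)) / (1/(J:ℝ))^2)
          + (1/σ^2) * f ((j:ℝ)/(J:ℝ)) (φt i j * ψt i j) * φt i j := hηv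
      have hid := scheme_diff (T/(I:ℝ)) (σ^2) ((1/(J:ℝ))^2)
        (Φs n (i+1) j) (Φs n i j) (Φs n i (min (j+1) J)) (Φs n i (j-1))
        (φt (i+1) j) (φt i j) (φt i (min (j+1) J)) (φt i (j-1))
        (f ((j:ℝ)/(J:ℝ)) (Φs n i j * Ψs n i j)) (f ((j:ℝ)/(J:ℝ)) (φt i j * ψt i j))
        (η i j) hΔt.ne' h1 hηv'
      have hnl0 := nonlin_bound (b := φt i j) (hfneg _ hx) (hfmono _ hx) hK0
        (fun ξ₁ ξ₂ h₁ h₂ => hK _ hx ξ₁ ξ₂ h₁ h₂)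
        (hphi i hi' j hj).1 (hphi i hi' j hj).2 (hpsi i hi' j hj) (hψt i hi' j hj)
      have hNL : (1/σ^2) * ((f ((j:ℝ)/(J:ℝ)) (Φs n i j * Ψs n i j) * Φs n i j
            - f ((j:ℝ)/(J:ℝ)) (φt i j * ψt i j) * φt i j) * (Φs n i j - φt i j))
          ≤ L * (|Ψs n i j - ψt i j| * |Φs n i j - φt i j|) := by
        have hinv : (0:ℝ) < 1/σ^2 := by positivity
        have hstep1 : (1/σ^2) * ((f ((j:ℝ)/(J:ℝ)) (Φs n i j * Ψs n i j) * Φs n i j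
              - f ((j:ℝ)/(J:ℝ)) (φt i j * ψt i j) * φt i j) * (Φs n i j - φt i j))
            ≤ (1/σ^2) * (K * Cφ^2 * (|Ψs n i j - ψt i j| * |Φs n i j - φt i j|)) :=
          mul_le_mul_of_nonneg_left hnl0 hinv.le
        refine le_trans hstep1 ?_
        have hXn : 0 ≤ |Ψs n i j - ψt i j| * |Φs n i j - φt i j| :=
          mul_nonneg (abs_nonneg _) (abs_nonneg _)
        have hcoef : (1/σ^2) * (K * Cφ^2) ≤ L := by
          rw [hLd]
          have := mul_le_mul_of_nonneg_left hCφ2M (div_nonneg hK0 hσ2.le)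
          calc (1/σ^2) * (K * Cφ^2) = K/σ^2 * Cφ^2 := by ring
            _ ≤ K/σ^2 * M := this
        calc (1/σ^2) * (K * Cφ^2 * (|Ψs n i j - ψt i j| * |Φs n i j - φt i j|))
            = ((1/σ^2) * (K * Cφ^2)) * (|Ψs n i j - ψt i j| * |Φs n i j - φt i j|) := by
              ring
          _ ≤ L * (|Ψs n i j - ψt i j| * |Φs n i j - φt i j|) :=
              mul_le_mul_of_nonneg_right hcoef hXn
      have hNL' : ((1/σ^2) * (f ((j:ℝ)/(J:ℝ)) (Φs n i j * Ψs n i j) * Φs n i j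
            - f ((j:ℝ)/(J:ℝ)) (φt i j * ψt i j) * φt i j)) * (Φs n i j - φt i j)
          ≤ L * (|Ψs n i j - ψt i j| * |Φs n i j - φt i j|) := by
        rw [mul_assoc]
        exact hNL
      exact pt_bound hid hΔt.le hNL'
    -- the four partial sums
    set A1 : ℝ := ∑ j ∈ Finset.range (J+1),
        (Φs n (i+1) j - φt (i+1) j) * (Φs n i j - φt i j) with hA1d
    set A2 : ℝ := ∑ j ∈ Finset.range (J+1),
        (T/(I:ℝ)) * ((σ^2/2 * (((Φs n i (min (j+1) J) - φt i (min (j+1) J))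
          - 2*(Φs n i j - φt i j) + (Φs n i (j-1) - φt i (j-1))) / (1/(J:ℝ))^2))
            * (Φs n i j - φt i j)) with hA2d
    set A3 : ℝ := ∑ j ∈ Finset.range (J+1),
        (T/(I:ℝ)) * (L * (|Ψs n i j - ψt i j| * |Φs n i j - φt i j|)) with hA3d
    set A4 : ℝ := ∑ j ∈ Finset.range (J+1),
        (T/(I:ℝ)) * (η i j * (Φs n i j - φt i j)) with hA4d
    have hsum : S i ≤ A1 + A2 + A3 + A4 := by
      have h1 : S i ≤ ∑ j ∈ Finset.range (J+1),
          ((Φs n (i+1) j - φt (i+1) j) * (Φs n i j - φt i j)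
            + (T/(I:ℝ)) * ((σ^2/2 * (((Φs n i (min (j+1) J) - φt i (min (j+1) J))
                - 2*(Φs n i j - φt i j) + (Φs n i (j-1) - φt i (j-1))) / (1/(J:ℝ))^2))
                  * (Φs n i j - φt i j))
            + (T/(I:ℝ)) * (L * (|Ψs n i j - ψt i j| * |Φs n i j - φt i j|))
            + (T/(I:ℝ)) * (η i j * (Φs n i j - φt i j))) := by
        refine Finset.sum_le_sum (fun j hj => ?_)
        exact hpt j (by have := Finset.mem_range.mp hj; omega)
      rw [Finset.sum_add_distrib, Finset.sum_add_distrib, Finset.sum_add_distrib] at h1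
      exact h1
    -- bound A2 (viscosity term)
    have hB2 : A2 ≤ 0 := by
      have hA2eq : A2 = ((T/(I:ℝ)) * (σ^2/2 / (1/(J:ℝ))^2)) *
          ∑ j ∈ Finset.range (J+1),
            (((fun j => Φs n i j - φt i j) (min (j+1) J))
              - 2 * ((fun j => Φs n i j - φt i j) j)
              + ((fun j => Φs n i j - φt i j) (j-1)))
            * ((fun j => Φs n i j - φt i j) j) := by
        rw [hA2d, Finset.mul_sum]
        refine Finset.sum_congr rfl (fun j _ => ?_)
        simp only
        ring
      rw [hA2eq, lap_sum J (fun j => Φs n i j - φt i j)]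
      have hc : (0:ℝ) ≤ (T/(I:ℝ)) * (σ^2/2 / (1/(J:ℝ))^2) := by positivity
      exact mul_nonpos_of_nonneg_of_nonpos hc
        (neg_nonpos_of_nonneg (Finset.sum_nonneg (fun j _ => sq_nonneg _)))
    -- bound A1
    have hB1 : A1 ≤ (S (i+1) + S i)/2 := by
      have h := Finset.sum_le_sum
        (f := fun j => (Φs n (i+1) j - φt (i+1) j) * (Φs n i j - φt i j))
        (g := fun j => ((Φs n (i+1) j - φt (i+1) j)^2 + (Φs n i j - φt i j)^2)/2)
        (s := Finset.range (J+1))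
        (fun j _ => young_sq _ _)
      rw [← Finset.sum_div, Finset.sum_add_distrib] at h
      exact h
    -- bound A3
    have hB3 : A3 ≤ (T/(I:ℝ)) * (L * ((W i + S i)/2)) := by
      have h := Finset.sum_le_sum
        (f := fun j => (T/(I:ℝ)) * (L * (|Ψs n i j - ψt i j| * |Φs n i j - φt i j|)))
        (g := fun j => (T/(I:ℝ)) * (L * (((Ψs n i j - ψt i j)^2 + (Φs n i j - φt i j)^2)/2)))
        (s := Finset.range (J+1))
        (fun j _ =>
          mul_le_mul_of_nonneg_left (mul_le_mul_of_nonneg_left (young_abs _ _) hL0) hΔt.le)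
      refine le_trans h (le_of_eq ?_)
      rw [← Finset.mul_sum, ← Finset.mul_sum, ← Finset.sum_div, Finset.sum_add_distrib]
    -- bound A4
    have hB4 : A4 ≤ (T/(I:ℝ)) * ((H i + S i)/2) := by
      have h := Finset.sum_le_sum
        (f := fun j => (T/(I:ℝ)) * (η i j * (Φs n i j - φt i j)))
        (g := fun j => (T/(I:ℝ)) * (((η i j)^2 + (Φs n i j - φt i j)^2)/2))
        (s := Finset.range (J+1))
        (fun j _ => mul_le_mul_of_nonneg_left (young_sq _ _) hΔt.le)
      refine le_trans h (le_of_eq ?_)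
      rw [← Finset.mul_sum, ← Finset.sum_div, Finset.sum_add_distrib]
    have hfinal : S i ≤ (S (i+1) + S i)/2 + (T/(I:ℝ)) * (L * ((W i + S i)/2))
        + (T/(I:ℝ)) * ((H i + S i)/2) := by linarith
    rw [hθd]
    linarith [hfinal]
  -- Gronwall recursion
  set G' : ℝ := ((J:ℝ)+1) * (L * Bw + Bh) / (L+1) with hG'd
  have hL1 : (0:ℝ) < L + 1 := by linarith
  have hG'0 : 0 ≤ G' := by
    rw [hG'd]
    have : 0 ≤ L * Bw + Bh := by nlinarith
    positivity
  have grow : ∀ d, S (I - d) ≤ ((1/θ)^d - 1) * G' := by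
    intro d
    induction d with
    | zero => simp [hSI]
    | succ d ih =>
      rcases le_or_gt I d with hd | hd
      · have hII : I - (d+1) = I - d := by omega
        rw [hII]
        refine le_trans ih ?_
        have h := pow_le_pow_right₀ hr1 (show d ≤ d + 1 by omega)
        have := mul_le_mul_of_nonneg_right h hG'0
        linarith
      · have hIi : I - (d+1) < I := by omega
        have hsucc : I - (d+1) + 1 = I - d := by omega
        have hrow := key (I - (d+1)) hIi
        rw [hsucc] at hrow
        have hWb := hWle (I-(d+1)) (by omega)
        have hHb := hHle (I-(d+1)) (by omega)
        have hLW : L * W (I-(d+1)) + H (I-(d+1)) ≤ ((J:ℝ)+1)*(L*Bw + Bh) := by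
          have h1 := mul_le_mul_of_nonneg_left hWb hL0
          nlinarith
        have h1θ : (T/(I:ℝ))*(L+1) = 1 - θ := by rw [hθd]; ring
        have hG'eq : ((J:ℝ)+1)*(L*Bw + Bh) = (L+1) * G' := by
          rw [hG'd]; field_simp
        have hbound : S (I-(d+1)) * θ ≤ ((1/θ)^d - 1)*G' + (1-θ)*G' := by
          have h2 : (T/(I:ℝ)) * (L * W (I-(d+1)) + H (I-(d+1)))
              ≤ (T/(I:ℝ)) * (((J:ℝ)+1)*(L*Bw + Bh)) :=
            mul_le_mul_of_nonneg_left hLW hΔt.le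
          have h3 : (T/(I:ℝ)) * (((J:ℝ)+1)*(L*Bw + Bh)) = (1-θ)*G' := by
            rw [hG'eq, ← h1θ]; ring
          linarith
        have hdiv : S (I-(d+1)) ≤ (((1/θ)^d - 1)*G' + (1-θ)*G')/θ := by
          rw [le_div_iff₀ hθ0]
          exact hbound
        refine le_trans hdiv (le_of_eq ?_)
        rw [pow_succ]
        field_simp
        ring
  have hSle : ∀ i ≤ I, S i ≤ ((1/θ)^I - 1) * G' := by
    intro i hi
    have h := grow (I - i)
    rw [show I - (I-i) = i by omega] at h
    refine le_trans h ?_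
    have h2 : (1/θ)^(I-i) ≤ (1/θ)^I := pow_le_pow_right₀ hr1 (by omega)
    have := mul_le_mul_of_nonneg_right h2 hG'0
    linarith
  -- bound on the amplification factor
  have hrIC : (1/θ)^I ≤ C := by
    rcases le_or_gt ((T/(I:ℝ))*(L+1)) (1/2) with hcase | hcase
    · have hx0 : (0:ℝ) ≤ (T/(I:ℝ))*(L+1) := mul_nonneg hΔt.le hL1.le
      have h1 : 1/θ ≤ 1 + 2*((T/(I:ℝ))*(L+1)) := by
        rw [div_le_iff₀ hθ0, hθd]
        nlinarith
      have h2 : 1/θ ≤ Real.exp (2*((T/(I:ℝ))*(L+1))) := by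
        refine le_trans h1 ?_
        have := Real.add_one_le_exp (2*((T/(I:ℝ))*(L+1)))
        linarith
      have h3 : (1/θ)^I ≤ Real.exp (2*((T/(I:ℝ))*(L+1)))^I :=
        pow_le_pow_left₀ (by positivity) h2 I
      have h4 : Real.exp (2*((T/(I:ℝ))*(L+1)))^I = Real.exp ((I:ℝ) * (2*((T/(I:ℝ))*(L+1)))) := by
        rw [← Real.exp_nat_mul]
      have h5 : (I:ℝ) * (2*((T/(I:ℝ))*(L+1))) = 2*(L+1)*T := by
        field_simp
      rw [h4, h5] at h3
      exact le_trans h3 (le_max_left _ _)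
    · have hIlt : (I:ℝ) < 2*(L+1)*T := by
        have h := mul_lt_mul_of_pos_left hcase hI0
        have heq : (I:ℝ) * ((T/(I:ℝ))*(L+1)) = T*(L+1) := by
          field_simp
        rw [heq] at h
        nlinarith
      have hIN : I ≤ N := by
        have h1 : (2*(L+1)*T) ≤ (N:ℝ) := by rw [hNd]; exact Nat.le_ceil _
        have h2 : (I:ℝ) < (N:ℝ) := lt_of_lt_of_le hIlt h1
        exact_mod_cast h2.le
      have hρ1 : (1:ℝ) ≤ ρ := le_max_left _ _
      have hrρ : 1/θ ≤ ρ := by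
        have h1 : 1/θ ≤ 1/(ν*(T/(I:ℝ))) :=
          one_div_le_one_div_of_le (mul_pos hν hΔt) hθν.le
        have h2 : 1/(ν*(T/(I:ℝ))) = (I:ℝ)/(ν*T) := by field_simp
        have h3 : (I:ℝ)/(ν*T) ≤ 2*(L+1)/ν := by
          rw [div_le_div_iff₀ (by positivity) hν]
          nlinarith
        rw [h2] at h1
        exact le_trans (le_trans h1 h3) (le_max_right _ _)
      calc (1/θ)^I ≤ ρ^I := pow_le_pow_left₀ (by positivity) hrρ I
        _ ≤ ρ^N := pow_le_pow_right₀ hρ1 hIN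
        _ ≤ C := le_max_right _ _
  -- conclusion
  rw [gnormSq]
  refine Finset.sup'_le _ _ (fun i hi => ?_)
  have hi' : i ≤ I := by have := Finset.mem_range.mp hi; omega
  have hSi := hSle i hi'
  have hR1 : (1:ℝ) ≤ (1/θ)^I := by
    calc (1:ℝ) = 1^I := (one_pow I).symm
      _ ≤ (1/θ)^I := pow_le_pow_left₀ zero_le_one hr1 I
  have hRC := hrIC
  have hstep : (1/((J:ℝ)+1)) * S i ≤ ((1/θ)^I - 1) * (L * Bw + Bh) / (L+1) := by
    have h2 : (1/((J:ℝ)+1)) * S i ≤ (1/((J:ℝ)+1)) * (((1/θ)^I - 1) * G') :=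
      mul_le_mul_of_nonneg_left hSi (by positivity)
    refine le_trans h2 (le_of_eq ?_)
    rw [hG'd]
    field_simp
  have hfin : ((1/θ)^I - 1) * (L * Bw + Bh) / (L+1) ≤ C * Bw + C * Bh := by
    rw [div_le_iff₀ hL1]
    nlinarith [mul_nonneg (mul_nonneg hL0 hBw0) (sub_nonneg.mpr hRC),
      mul_nonneg hBh0 (sub_nonneg.mpr hRC),
      mul_nonneg hC0.le hBw0, mul_nonneg hC0.le hBh0,
      mul_nonneg hL0 hBw0, mul_nonneg (mul_nonneg hC0.le hL0) hBh0,
      mul_nonneg hL0 hBh0]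
  calc (1/((J:ℝ)+1)) * ∑ j ∈ Finset.range (J+1), ((fun i j => Φs n i j - φt i j) i j)^2
      = (1/((J:ℝ)+1)) * S i := rfl
    _ ≤ ((1/θ)^I - 1) * (L * Bw + Bh) / (L+1) := hstep
    _ ≤ C * Bw + C * Bh := hfin
end
end

section
/- Stability of the forward step: assume in addition that f is uniformly Lipschitz in its second variable with constant K. Then for every ν > 0 there exists C > 0 (depending only on ν, T, σ, K, ‖u_T‖_∞, ‖f‖_∞, ‖m_0‖_∞) such that for all integers I, J ≥ 1 with 1/Δt > 1 + (K/σ²)·max(‖exp(u_T/σ²)‖²_∞, ‖m_0‖²_∞/ε²) + ν, the following holds for every n ∈ ℕ: for every φ̃ ∈ M_ε and every ψ̃ ∈ M_0 with ψ̃_{0,j} = m_0(x_j)/φ̃_{0,j} for all j, defining the residual η̃_{i+1,j} := (ψ̃_{i+1,j} − ψ̃_{i,j})/Δt − (σ²/2)(ψ̃_{i+1,j+1} − 2ψ̃_{i+1,j} + ψ̃_{i+1,j-1})/(Δx)² − (1/σ²) f(x_j, φ̃_{i+1,j} ψ̃_{i+1,j}) ψ̃_{i+1,j} for 0 ≤ i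 ≤ I−1, 0 ≤ j ≤ J (and η̃_{0,j} := 0), one has ‖ψ̂^{n+1} − ψ̃‖² ≤ C‖φ̂^{n+1/2} − φ̃‖² + C‖η̃‖², where φ̂^{n+1/2}, ψ̂^{n+1} are the scheme iterates. -/
noncomputable section

open Real Filter

/- ---------------- Auxiliary lemmas ---------------- -/

lemma lap_sum_nonpos (J : ℕ) (u : ℕ → ℝ) :
    ∑ j ∈ Finset.range (J+1), u j * (u (min (j+1) J) - 2*u j + u (j-1)) ≤ 0 := by
  have key : ∑ j ∈ Finset.range (J+1), u j * (u (min (j+1) J) - 2*u j + u (j-1))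
      = - ∑ j ∈ Finset.range J, (u (j+1) - u j)^2 := by
    have h1 : ∑ j ∈ Finset.range (J+1), u j * u (min (j+1) J)
        = (∑ j ∈ Finset.range J, u j * u (j+1)) + u J * u J := by
      rw [Finset.sum_range_succ]
      congr 1
      · refine Finset.sum_congr rfl fun j hj => ?_
        have := Finset.mem_range.mp hj
        rw [min_eq_left (by omega : j+1 ≤ J)]
      · rw [min_eq_right (by omega)]
    have h2 : ∑ j ∈ Finset.range (J+1), u j * u (j-1)
        = u 0 * u 0 + ∑ j ∈ Finset.range J, u j * u (j+1) := by
      rw [Finset.sum_range_succ']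
      simp only [Nat.add_sub_cancel, Nat.zero_sub]
      rw [add_comm]
      congr 1
      exact Finset.sum_congr rfl fun j _ => mul_comm _ _
    have h3 : ∑ j ∈ Finset.range (J+1), u j * (u (min (j+1) J) - 2*u j + u (j-1))
        = (∑ j ∈ Finset.range (J+1), u j * u (min (j+1) J))
          - 2 * ∑ j ∈ Finset.range (J+1), (u j)^2
          + ∑ j ∈ Finset.range (J+1), u j * u (j-1) := by
      rw [Finset.mul_sum, ← Finset.sum_sub_distrib, ← Finset.sum_add_distrib]
      exact Finset.sum_congr rfl fun j _ => by ring
    have h4 : ∑ j ∈ Finset.range J, (u (j+1) - u j)^2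
        = (∑ j ∈ Finset.range (J+1), (u j)^2 - (u 0)^2)
          + (∑ j ∈ Finset.range (J+1), (u j)^2 - (u J)^2)
          - 2 * ∑ j ∈ Finset.range J, u j * u (j+1) := by
      have ha : ∑ j ∈ Finset.range J, (u (j+1))^2
          = ∑ j ∈ Finset.range (J+1), (u j)^2 - (u 0)^2 := by
        rw [Finset.sum_range_succ']; ring
      have hb : ∑ j ∈ Finset.range J, (u j)^2
          = ∑ j ∈ Finset.range (J+1), (u j)^2 - (u J)^2 := by
        rw [Finset.sum_range_succ]; ring
      calc ∑ j ∈ Finset.range J, (u (j+1) - u j)^2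
          = ∑ j ∈ Finset.range J, ((u (j+1))^2 + (u j)^2 - 2*(u j * u (j+1)))  := by
            exact Finset.sum_congr rfl fun j _ => by ring
        _ = (∑ j ∈ Finset.range J, (u (j+1))^2) + (∑ j ∈ Finset.range J, (u j)^2)
            - 2 * ∑ j ∈ Finset.range J, u j * u (j+1) := by
            rw [Finset.sum_sub_distrib, Finset.sum_add_distrib, Finset.mul_sum]
        _ = _ := by rw [ha, hb]
    rw [h3, h1, h2, h4]; ring
  rw [key]
  simp only [neg_nonpos]
  exact Finset.sum_nonneg fun j _ => sq_nonneg _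

lemma step_upper (J : ℕ) (lam : ℝ) (hlam : 0 ≤ lam) (a u v : ℕ → ℝ)
    (ha : ∀ j ≤ J, 0 ≤ a j)
    (heq : ∀ j ≤ J, u j * (1 + 2*lam + a j) = v j + lam * u (min (j+1) J) + lam * u (j-1))
    (hi : ℝ) (hhi : 0 ≤ hi) (hv : ∀ j ≤ J, v j ≤ hi) :
    ∀ j ≤ J, u j ≤ hi := by
  obtain ⟨js, hjs, hmax⟩ := Finset.exists_max_image (Finset.range (J+1)) u
    ⟨0, Finset.mem_range.mpr (Nat.succ_pos J)⟩
  have hjsJ : js ≤ J := by have := Finset.mem_range.mp hjs; omega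
  have hmax' : ∀ j ≤ J, u j ≤ u js := fun j hj =>
    hmax j (Finset.mem_range.mpr (by omega))
  intro j hj
  refine le_trans (hmax' j hj) ?_
  have h1 : u (min (js+1) J) ≤ u js := hmax' _ (min_le_right _ _)
  have h2 : u (js-1) ≤ u js := hmax' _ (by omega)
  have he := heq js hjsJ
  have hvj := hv js hjsJ
  have haj := ha js hjsJ
  rcases le_or_gt (u js) 0 with h | h
  · linarith
  · nlinarith [mul_nonneg hlam (sub_nonneg.mpr h1), mul_nonneg hlam (sub_nonneg.mpr h2),
      mul_nonneg (le_of_lt h) haj]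

lemma step_lower (J : ℕ) (lam : ℝ) (hlam : 0 ≤ lam) (a u v : ℕ → ℝ)
    (ha : ∀ j ≤ J, 0 ≤ a j) (abar : ℝ) (ha2 : ∀ j ≤ J, a j ≤ abar)
    (heq : ∀ j ≤ J, u j * (1 + 2*lam + a j) = v j + lam * u (min (j+1) J) + lam * u (j-1))
    (lo : ℝ) (hlo : 0 ≤ lo) (hv : ∀ j ≤ J, lo ≤ v j) :
    ∀ j ≤ J, lo / (1+abar) ≤ u j := by
  have habar : 0 ≤ abar := le_trans (ha 0 (Nat.zero_le J)) (ha2 0 (Nat.zero_le J))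
  obtain ⟨js, hjs, hmin⟩ := Finset.exists_min_image (Finset.range (J+1)) u
    ⟨0, Finset.mem_range.mpr (Nat.succ_pos J)⟩
  have hjsJ : js ≤ J := by have := Finset.mem_range.mp hjs; omega
  have hmin' : ∀ j ≤ J, u js ≤ u j := fun j hj =>
    hmin j (Finset.mem_range.mpr (by omega))
  intro j hj
  refine le_trans ?_ (hmin' j hj)
  have h1 : u js ≤ u (min (js+1) J) := hmin' _ (min_le_right _ _)
  have h2 : u js ≤ u (js-1) := hmin' _ (by omega)
  have he := heq js hjsJ
  have hvj := hv js hjsJ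
  have haj := ha js hjsJ
  have haj2 := ha2 js hjsJ
  have key : lo ≤ u js * (1 + a js) := by
    nlinarith [mul_nonneg hlam (sub_nonneg.mpr h1), mul_nonneg hlam (sub_nonneg.mpr h2)]
  have hupos : 0 ≤ u js := by
    by_contra hneg
    push_neg at hneg
    nlinarith
  rw [div_le_iff₀ (by linarith : (0:ℝ) < 1 + abar)]
  nlinarith

set_option maxHeartbeats 1000000 in
lemma nonlin_bound_s10 (σ K ε B : ℝ) (hσ : 0 < σ) (hε : 0 < ε) (hB : 0 ≤ B) (hK : 0 ≤ K)
    (F1 F2 φ1 φ2 ψ1 ψ2 : ℝ)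
    (hφ2 : ε ≤ φ2) (hψ1 : 0 ≤ ψ1) (hψ1B : ψ1 ≤ B)
    (hF2 : F2 ≤ 0)
    (hmono : (F1 - F2) * (φ1*ψ1 - φ2*ψ2) ≤ 0)
    (hlip : |F1 - F2| ≤ K * |φ1*ψ1 - φ2*ψ2|) :
    (1/σ^2) * (F1*ψ1 - F2*ψ2) * (ψ1 - ψ2) ≤
      (K*B^2/(2*σ^2)) * ((ψ1-ψ2)^2 + (φ1-φ2)^2) + (K*B^3/(ε*σ^2)) * (φ1-φ2)^2 := by
  have hφ2pos : 0 < φ2 := lt_of_lt_of_le hε hφ2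
  obtain ⟨e, he⟩ : ∃ e, ψ1 - ψ2 = e := ⟨_, rfl⟩
  obtain ⟨δ, hδ⟩ : ∃ δ, φ1 - φ2 = δ := ⟨_, rfl⟩
  obtain ⟨G, hG⟩ : ∃ G, F1 - F2 = G := ⟨_, rfl⟩
  have hD : φ1*ψ1 - φ2*ψ2 = φ2*e + ψ1*δ := by rw [← he, ← hδ]; ring
  rw [hD, hG] at hmono hlip
  have hDle : |φ2*e + ψ1*δ| ≤ φ2 * |e| + ψ1 * |δ| := by
    refine le_trans (abs_add_le _ _) ?_
    rw [abs_mul, abs_mul, abs_of_pos hφ2pos, abs_of_nonneg hψ1]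
  have key : G*ψ1*e*φ2 ≤ ψ1^2 * (K * ((φ2 * |e| + ψ1 * |δ|) * |δ|)) := by
    have m1 : ψ1*(G*(φ2*e + ψ1*δ)) ≤ 0 := mul_nonpos_of_nonneg_of_nonpos hψ1 hmono
    have m2 : -(G * δ) ≤ |G| * |δ| := by rw [← abs_mul]; exact neg_le_abs _
    have inner : |G| * |δ| ≤ K * ((φ2 * |e| + ψ1 * |δ|) * |δ|) := by
      calc |G| * |δ| ≤ (K * |φ2*e + ψ1*δ|) * |δ| := mul_le_mul_of_nonneg_right hlip (abs_nonneg _)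
        _ = K * (|φ2*e + ψ1*δ| * |δ|) := by ring
        _ ≤ K * ((φ2 * |e| + ψ1 * |δ|) * |δ|) :=
            mul_le_mul_of_nonneg_left (mul_le_mul_of_nonneg_right hDle (abs_nonneg _)) hK
    calc G*ψ1*e*φ2 = ψ1*(G*(φ2*e + ψ1*δ)) + ψ1^2*(-(G * δ)) := by ring
      _ ≤ 0 + ψ1^2*(|G| * |δ|) := add_le_add m1 (mul_le_mul_of_nonneg_left m2 (sq_nonneg _))
      _ = ψ1^2*(|G| * |δ|) := zero_add _
      _ ≤ _ := mul_le_mul_of_nonneg_left inner (sq_nonneg _)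
  have step : G*ψ1*e ≤ K*B^2*(|e| * |δ|) + K*B^3*δ^2/ε := by
    have h1 : G*ψ1*e ≤ (ψ1^2 * (K * ((φ2 * |e| + ψ1 * |δ|) * |δ|)))/φ2 :=
      (le_div_iff₀ hφ2pos).mpr key
    have h2 : (ψ1^2 * (K * ((φ2 * |e| + ψ1 * |δ|) * |δ|)))/φ2
        = ψ1^2*K*(|e| * |δ|) + (ψ1^3*K*(|δ| * |δ|))/φ2 := by
      have aux : |δ| * |δ| = δ * δ := abs_mul_abs_self δ
      field_simp
    have h3 : ψ1^2*K*(|e| * |δ|) ≤ K*B^2*(|e| * |δ|) := by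
      have hsq : ψ1^2 ≤ B^2 := pow_le_pow_left₀ hψ1 hψ1B 2
      have hm : (0:ℝ) ≤ |e| * |δ| := mul_nonneg (abs_nonneg _) (abs_nonneg _)
      nlinarith [mul_le_mul_of_nonneg_right (mul_le_mul_of_nonneg_right hsq hK) hm]
    have h4 : (ψ1^3*K*(|δ| * |δ|))/φ2 ≤ K*B^3*δ^2/ε := by
      rw [abs_mul_abs_self]
      refine div_le_div₀ (by positivity) ?_ hε hφ2
      rw [← sq]
      have hc : ψ1^3 ≤ B^3 := pow_le_pow_left₀ hψ1 hψ1B 3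
      nlinarith [mul_le_mul_of_nonneg_right (mul_le_mul_of_nonneg_right hc hK) (mul_self_nonneg δ)]
    calc G*ψ1*e ≤ _ := h1
      _ = _ := h2
      _ ≤ K*B^2*(|e| * |δ|) + K*B^3*δ^2/ε := add_le_add h3 h4
  have habs : |e| * |δ| ≤ (e^2 + δ^2)/2 := by
    nlinarith [sq_nonneg (|e| - |δ|), sq_abs e, sq_abs δ]
  have main : (F2*e + G*ψ1)*e ≤ K*B^2/2*(e^2+δ^2) + (K*B^3/ε)*δ^2 := by
    have hF2e : F2*(e*e) ≤ 0 := mul_nonpos_of_nonpos_of_nonneg hF2 (mul_self_nonneg _)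
    have hh : K*B^2*(|e| * |δ|) ≤ K*B^2/2*(e^2+δ^2) := by
      have hKB : (0:ℝ) ≤ K*B^2 := by positivity
      nlinarith [mul_le_mul_of_nonneg_left habs hKB]
    have expand : (F2*e + G*ψ1)*e = F2*(e*e) + G*ψ1*e := by ring
    rw [expand]
    have step' : G*ψ1*e ≤ K*B^2*(|e| * |δ|) + K*B^3/ε*δ^2 := by
      rw [div_mul_eq_mul_div]; exact step
    linarith [step', hh, hF2e]
  have hsplit : F1*ψ1 - F2*ψ2 = F2*e + G*ψ1 := by rw [← he, ← hG]; ring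
  rw [he, hδ, hsplit]
  have hσ2 : (0:ℝ) < σ^2 := by positivity
  have hfin : (1/σ^2) * ((F2*e + G*ψ1)*e) ≤ (1/σ^2) * (K*B^2/2*(e^2+δ^2) + (K*B^3/ε)*δ^2) :=
    mul_le_mul_of_nonneg_left main (by positivity)
  calc (1/σ^2) * (F2*e + G*ψ1) * e = (1/σ^2) * ((F2*e + G*ψ1)*e) := by ring
    _ ≤ (1/σ^2) * (K*B^2/2*(e^2+δ^2) + (K*B^3/ε)*δ^2) := hfin
    _ = (K*B^2/(2*σ^2)) * (e^2 + δ^2) + (K*B^3/(ε*σ^2)) * δ^2 := by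
        field_simp

lemma clearF (Δt Δx2 d a b lap c : ℝ) (hΔt : Δt ≠ 0) (hΔx2 : Δx2 ≠ 0)
    (h : (a - b)/Δt - d*(lap/Δx2) = c) : a - b - (Δt*d/Δx2)*lap = Δt*c := by
  field_simp at h ⊢
  linear_combination h

lemma clearB (Δt Δx2 d a b lap c : ℝ) (hΔt : Δt ≠ 0) (hΔx2 : Δx2 ≠ 0)
    (h : (a - b)/Δt + d*(lap/Δx2) = c) : a - b + (Δt*d/Δx2)*lap = Δt*c := by
  field_simp at h ⊢
  linear_combination h

lemma fwd_step (T σ : ℝ) (I J : ℕ) (hT : T ≠ 0) (hI : (I:ℝ) ≠ 0) (hJ : ((J:ℝ)) ≠ 0)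
    (up um uc v F : ℝ)
    (h : (uc - v)/(T/(I:ℝ)) - σ^2/2*((up - 2*uc + um)/(1/(J:ℝ))^2) = (1/σ^2)*F*uc) :
    uc * (1 + 2*((T/(I:ℝ))*(σ^2/2)/((1/(J:ℝ))^2)) + (T/(I:ℝ))*(1/σ^2)*(-F))
      = v + ((T/(I:ℝ))*(σ^2/2)/((1/(J:ℝ))^2)) * up
          + ((T/(I:ℝ))*(σ^2/2)/((1/(J:ℝ))^2)) * um := by
  have h1 := clearF (T/(I:ℝ)) ((1/(J:ℝ))^2) (σ^2/2) uc v (up - 2*uc + um) ((1/σ^2)*F*uc)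
    (div_ne_zero hT hI) (pow_ne_zero 2 (one_div_ne_zero hJ)) h
  linear_combination h1

lemma bwd_step (T σ : ℝ) (I J : ℕ) (hT : T ≠ 0) (hI : (I:ℝ) ≠ 0) (hJ : ((J:ℝ)) ≠ 0)
    (up um uc v F : ℝ)
    (h : (v - uc)/(T/(I:ℝ)) + σ^2/2*((up - 2*uc + um)/(1/(J:ℝ))^2) = -(1/σ^2)*F*uc) :
    uc * (1 + 2*((T/(I:ℝ))*(σ^2/2)/((1/(J:ℝ))^2)) + (T/(I:ℝ))*(1/σ^2)*(-F))
      = v + ((T/(I:ℝ))*(σ^2/2)/((1/(J:ℝ))^2)) * up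
          + ((T/(I:ℝ))*(σ^2/2)/((1/(J:ℝ))^2)) * um := by
  have h1 := clearB (T/(I:ℝ)) ((1/(J:ℝ))^2) (σ^2/2) v uc (up - 2*uc + um) (-(1/σ^2)*F*uc)
    (div_ne_zero hT hI) (pow_ne_zero 2 (one_div_ne_zero hJ)) h
  linear_combination -h1

lemma anti_mul_nonpos {g : ℝ → ℝ} (hg : Antitone g) (a b : ℝ) : (g b - g a) * (b - a) ≤ 0 := by
  rcases le_total a b with h | h
  · exact mul_nonpos_of_nonpos_of_nonneg (by simpa using sub_nonpos.mpr (hg h)) (by linarith)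
  · exact mul_nonpos_of_nonneg_of_nonpos (by simpa using sub_nonneg.mpr (hg h)) (by linarith)

lemma pow_one_add_le_exp (a : ℝ) (ha : 0 ≤ a) (n : ℕ) : (1+a)^n ≤ Real.exp (n*a) := by
  calc (1+a)^n ≤ (Real.exp a)^n :=
        pow_le_pow_left₀ (by linarith) (by linarith [Real.add_one_le_exp a]) n
    _ = Real.exp (n*a) := by rw [← Real.exp_nat_mul]

lemma le_supIcc {g : ℝ → ℝ} (hb : ∃ B : ℝ, ∀ x ∈ Set.Icc (0:ℝ) 1, |g x| ≤ B)
    {x : ℝ} (hx : x ∈ Set.Icc (0:ℝ) 1) : |g x| ≤ supIcc g := by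
  obtain ⟨B, hB⟩ := hb
  exact le_ciSup (f := fun y : Set.Icc (0:ℝ) 1 => |g (y:ℝ)|)
    ⟨B, by rintro r ⟨y, rfl⟩; exact hB y y.2⟩ ⟨x, hx⟩

lemma le_supF {f : ℝ → ℝ → ℝ} (hb : ∃ B : ℝ, ∀ x ∈ Set.Icc (0:ℝ) 1, ∀ ξ : ℝ, |f x ξ| ≤ B)
    {x : ℝ} (hx : x ∈ Set.Icc (0:ℝ) 1) (ξ : ℝ) : |f x ξ| ≤ supF f := by
  obtain ⟨B, hB⟩ := hb
  exact le_ciSup (f := fun p : Set.Icc (0:ℝ) 1 × ℝ => |f (p.1 : ℝ) p.2|)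
    ⟨B, by rintro r ⟨p, rfl⟩; exact hB p.1 p.1.2 p.2⟩ (⟨⟨x, hx⟩, ξ⟩ : Set.Icc (0:ℝ) 1 × ℝ)

lemma gnormSq_row (I J : ℕ) (m : ℕ → ℕ → ℝ) {i : ℕ} (hi : i ≤ I) :
    (1/((J:ℝ)+1)) * ∑ j ∈ Finset.range (J+1), (m i j)^2 ≤ gnormSq I J m :=
  Finset.le_sup' (fun i => (1/((J:ℝ)+1)) * ∑ j ∈ Finset.range (J+1), (m i j)^2)
    (Finset.mem_range.mpr (Nat.lt_succ_of_le hi))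

lemma gnormSq_nonneg (I J : ℕ) (m : ℕ → ℕ → ℝ) : 0 ≤ gnormSq I J m :=
  le_trans (by positivity) (gnormSq_row I J m (Nat.zero_le I))

lemma gnormSq_le (I J : ℕ) (m : ℕ → ℕ → ℝ) (r : ℝ)
    (h : ∀ i ≤ I, (1/((J:ℝ)+1)) * ∑ j ∈ Finset.range (J+1), (m i j)^2 ≤ r) :
    gnormSq I J m ≤ r :=
  Finset.sup'_le _ _ fun i hi => h i (by have := Finset.mem_range.mp hi; omega)

set_option maxHeartbeats 4000000 in
theorem stmt_10 (T σ : ℝ) (hT : 0 < T) (hσ : 0 < σ)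
    (f : ℝ → ℝ → ℝ) (uT m0 : ℝ → ℝ)
    (hfc : ∀ x ∈ Set.Icc (0:ℝ) 1, Continuous (f x))
    (hfb : ∃ B : ℝ, ∀ x ∈ Set.Icc (0:ℝ) 1, ∀ ξ : ℝ, |f x ξ| ≤ B)
    (hfneg : ∀ x ∈ Set.Icc (0:ℝ) 1, ∀ ξ : ℝ, f x ξ ≤ 0)
    (hfmono : ∀ x ∈ Set.Icc (0:ℝ) 1, Antitone (f x))
    (huTb : ∃ B : ℝ, ∀ x ∈ Set.Icc (0:ℝ) 1, |uT x| ≤ B)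
    (hm0b : ∃ B : ℝ, ∀ x ∈ Set.Icc (0:ℝ) 1, |m0 x| ≤ B)
    (hm0 : ∀ x ∈ Set.Icc (0:ℝ) 1, 0 ≤ m0 x)
    (K : ℝ)
    (hK : ∀ x ∈ Set.Icc (0:ℝ) 1, ∀ ξ₁ ξ₂ : ℝ, 0 ≤ ξ₁ → 0 ≤ ξ₂ →
      |f x ξ₂ - f x ξ₁| ≤ K * |ξ₂ - ξ₁|)
    (ν : ℝ) (hν : 0 < ν) :
    ∃ C > 0, ∀ I J : ℕ, 1 ≤ I → 1 ≤ J →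
      (I:ℝ)/T > 1 + K/σ^2 *
        max ((supIcc fun x => Real.exp (uT x / σ^2))^2)
            ((supIcc m0)^2 / (Real.exp (-(supIcc uT + supF f * T) / σ^2))^2) + ν →
      ∀ Φs Ψs : ℕ → ℕ → ℕ → ℝ,
        (∀ i ≤ I, ∀ j ≤ J, Ψs 0 i j = 0) →
        (∀ m : ℕ, BScheme T σ I J f uT (Ψs m) (Φs m)) →
        (∀ m : ℕ, FScheme T σ I J f m0 (Φs m) (Ψs (m+1))) →
      ∀ n : ℕ, ∀ φt ψt : ℕ → ℕ → ℝ,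
        MemM I J (Real.exp (-(supIcc uT + supF f * T) / σ^2)) φt →
        MemM I J 0 ψt →
        (∀ j ≤ J, ψt 0 j = m0 ((j:ℝ)/(J:ℝ)) / φt 0 j) →
        gnormSq I J (fun i j => Ψs (n+1) i j - ψt i j)
          ≤ C * gnormSq I J (fun i j => Φs n i j - φt i j)
            + C * gnormSq I J (fun i j =>
                if i = 0 then 0
                else
                  (ψt i j - ψt (i-1) j) / (T/(I:ℝ))
                    - σ^2/2 * ((ψt i (min (j+1) J) - 2*ψt i j + ψt i (j-1)) / (1/(J:ℝ))^2)
                    - (1/σ^2) * f ((j:ℝ)/(J:ℝ)) (φt i j * ψt i j) * ψt i j) := by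
  have hσ2 : (0:ℝ) < σ^2 := by positivity
  have hx0 : (0:ℝ) ∈ Set.Icc (0:ℝ) 1 := by constructor <;> norm_num
  have hK0 : 0 ≤ K := by
    have h := hK 0 hx0 0 1 le_rfl zero_le_one
    simp only [sub_zero, abs_one, mul_one] at h
    exact le_trans (abs_nonneg _) h
  set ε := Real.exp (-(supIcc uT + supF f * T) / σ^2) with hεdef
  set Su := supIcc (fun x => Real.exp (uT x / σ^2)) with hSudef
  set Sm := supIcc m0 with hSmdef
  have hε : 0 < ε := Real.exp_pos _
  have hm0le : ∀ x ∈ Set.Icc (0:ℝ) 1, |m0 x| ≤ Sm := fun x hx => le_supIcc hm0b hx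
  have hSm0 : 0 ≤ Sm := le_trans (abs_nonneg _) (hm0le 0 hx0)
  have hexpb : ∃ B : ℝ, ∀ x ∈ Set.Icc (0:ℝ) 1, |Real.exp (uT x / σ^2)| ≤ B := by
    obtain ⟨Bu, hBu⟩ := huTb
    refine ⟨Real.exp (Bu/σ^2), fun x hx => ?_⟩
    rw [abs_of_pos (Real.exp_pos _)]
    apply Real.exp_le_exp.mpr
    have h1 : uT x ≤ Bu := le_trans (le_abs_self _) (hBu x hx)
    gcongr
  have hSule : ∀ x ∈ Set.Icc (0:ℝ) 1, Real.exp (uT x / σ^2) ≤ Su := fun x hx => by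
    have := le_supIcc hexpb hx
    rwa [abs_of_pos (Real.exp_pos _)] at this
  have hSu0 : 0 ≤ Su := le_trans (abs_nonneg _) (le_supIcc hexpb hx0)
  have huTle : ∀ x ∈ Set.Icc (0:ℝ) 1, |uT x| ≤ supIcc uT := fun x hx => le_supIcc huTb hx
  have hfle : ∀ x ∈ Set.Icc (0:ℝ) 1, ∀ ξ : ℝ, |f x ξ| ≤ supF f := fun x hx ξ => le_supF hfb hx ξ
  have hSF0 : 0 ≤ supF f := le_trans (abs_nonneg _) (hfle 0 hx0 0)
  set B := Sm/ε with hBdef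
  have hB0 : 0 ≤ B := div_nonneg hSm0 hε.le
  set M := max (Su^2) (Sm^2/ε^2) with hMdef
  have hM0 : 0 ≤ M := le_trans (sq_nonneg Su) (le_max_left _ _)
  have hB2M : B^2 ≤ M := by rw [hBdef, div_pow]; exact le_max_right _ _
  set c := 1 + K/σ^2*M with hcdef
  have hKσ : 0 ≤ K/σ^2 := div_nonneg hK0 hσ2.le
  have hc1 : 1 ≤ c := by
    rw [hcdef]
    linarith only [mul_nonneg hKσ hM0]
  set A := c + ν with hAdef
  have hA0 : 0 < A := by rw [hAdef]; linarith
  set G := Real.exp (T*c*A/ν) with hGdef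
  have hG1 : 1 ≤ G := by
    rw [hGdef]
    have : 0 ≤ T*c*A/ν := by positivity
    calc (1:ℝ) = Real.exp 0 := (Real.exp_zero).symm
      _ ≤ _ := Real.exp_le_exp.mpr this
  have hG0 : 0 ≤ G := le_trans zero_le_one hG1
  set cp := K*B^2/(2*σ^2) + K*B^3/(ε*σ^2) with hcpdef
  have hcp0 : 0 ≤ cp := by
    rw [hcpdef]
    have h1 : 0 ≤ K*B^2/(2*σ^2) := div_nonneg (mul_nonneg hK0 (sq_nonneg _)) (by positivity)
    have h2 : 0 ≤ K*B^3/(ε*σ^2) := div_nonneg (mul_nonneg hK0 (pow_nonneg hB0 3)) (by positivity)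
    exact add_nonneg h1 h2
  have hinner0 : 0 ≤ Sm^2/ε^4 + 2*T*cp + T := by
    have h1 : 0 ≤ Sm^2/ε^4 := by positivity
    have h2 : 0 ≤ 2*T*cp := by
      have := mul_nonneg hT.le hcp0
      linarith only [this]
    exact add_nonneg (add_nonneg h1 h2) hT.le
  clear_value ε Su Sm B M c A G cp
  refine ⟨G*(Sm^2/ε^4 + 2*T*cp + T) + 1, by linarith only [mul_nonneg hG0 hinner0], ?_⟩
  intro I J hI hJ hcond Φs Ψs hΨ0 hBs hFs n φt ψt hφt hψt hψt0
  have hIpos : (0:ℝ) < (I:ℝ) := by exact_mod_cast Nat.lt_of_lt_of_le Nat.zero_lt_one hI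
  have hJpos : (0:ℝ) < (J:ℝ) := by exact_mod_cast Nat.lt_of_lt_of_le Nat.zero_lt_one hJ
  have hIne : (I:ℝ) ≠ 0 := ne_of_gt hIpos
  have hJne : (J:ℝ) ≠ 0 := ne_of_gt hJpos
  have hΔt : 0 < T/(I:ℝ) := div_pos hT hIpos
  set Δt := T/(I:ℝ) with hΔtdef
  set lam := Δt*(σ^2/2)/((1/(J:ℝ))^2) with hlamdef
  have hlam : 0 ≤ lam := le_of_lt (div_pos (mul_pos hΔt (by positivity)) (by positivity))
  have hxmem : ∀ j ≤ J, ((j:ℝ)/(J:ℝ)) ∈ Set.Icc (0:ℝ) 1 := by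
    intro j hj
    constructor
    · positivity
    · rw [div_le_one hJpos]; exact_mod_cast hj
  obtain ⟨hBeq, hBterm⟩ := hBs n
  obtain ⟨hFeq, hFinit⟩ := hFs n
  set φh := Φs n with hφhdef
  set ψh := Ψs (n+1) with hψhdef
  set abar := Δt*(supF f)/σ^2 with habardef
  have habar0 : 0 ≤ abar := div_nonneg (mul_nonneg hΔt.le hSF0) hσ2.le
  set elo := Real.exp (-(supIcc uT)/σ^2) with helodef
  have helo : 0 < elo := Real.exp_pos _
  -- bounds on the backward iterate φh
  have hφclaim : ∀ d : ℕ, ∀ i, i + d = I → ∀ j ≤ J,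
      elo/(1+abar)^d ≤ φh i j ∧ φh i j ≤ Su := by
    intro d
    induction d with
    | zero =>
      intro i hi j hj
      have hiI : i = I := by omega
      rw [hiI, hBterm j hj]
      constructor
      · simp only [pow_zero, div_one]
        rw [helodef]
        apply Real.exp_le_exp.mpr
        have h1 : -(supIcc uT) ≤ uT ((j:ℝ)/(J:ℝ)) :=
          neg_le_of_abs_le (huTle _ (hxmem j hj))
        gcongr
      · exact hSule _ (hxmem j hj)
    | succ d ih =>
      intro i hiI j hj
      have hilt : i < I := by omega
      have ha : ∀ j' ≤ J, 0 ≤ Δt*(1/σ^2)*(-(f ((j':ℝ)/(J:ℝ)) (φh i j' * Ψs n i j'))) := by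
        intro j' hj'
        exact mul_nonneg (mul_nonneg hΔt.le (by positivity))
          (neg_nonneg.mpr (hfneg _ (hxmem j' hj') _))
      have ha2 : ∀ j' ≤ J, Δt*(1/σ^2)*(-(f ((j':ℝ)/(J:ℝ)) (φh i j' * Ψs n i j'))) ≤ abar := by
        intro j' hj'
        have h1 : -(f ((j':ℝ)/(J:ℝ)) (φh i j' * Ψs n i j')) ≤ supF f :=
          le_trans (neg_le_abs _) (hfle _ (hxmem j' hj') _)
        calc Δt*(1/σ^2)*(-(f ((j':ℝ)/(J:ℝ)) (φh i j' * Ψs n i j')))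
            ≤ Δt*(1/σ^2)*(supF f) :=
              mul_le_mul_of_nonneg_left h1 (mul_nonneg hΔt.le (by positivity))
          _ = abar := by rw [habardef]; ring
      have hstepf : ∀ j' ≤ J, φh i j' * (1 + 2*lam
            + Δt*(1/σ^2)*(-(f ((j':ℝ)/(J:ℝ)) (φh i j' * Ψs n i j'))))
          = φh (i+1) j' + lam * φh i (min (j'+1) J) + lam * φh i (j'-1) := by
        intro j' hj'
        exact bwd_step T σ I J hT.ne' hIne hJne _ _ _ _ _ (hBeq i hilt j' hj')
      constructor
      · have hlow := step_lower J lam hlam _ (φh i) (φh (i+1)) ha abar ha2 hstepf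
          (elo/(1+abar)^d) (div_nonneg helo.le (pow_nonneg (by linarith only [habar0]) d))
          (fun j' hj' => (ih (i+1) (by omega) j' hj').1) j hj
        calc elo/(1+abar)^(d+1) = elo/(1+abar)^d/(1+abar) := by
              rw [pow_succ, ← div_div]
          _ ≤ φh i j := hlow
      · exact step_upper J lam hlam _ (φh i) (φh (i+1)) ha hstepf Su hSu0
          (fun j' hj' => (ih (i+1) (by omega) j' hj').2) j hj
  have hφb : ∀ i ≤ I, ∀ j ≤ J, ε ≤ φh i j ∧ φh i j ≤ Su := by
    intro i hi j hj
    obtain ⟨hl, hu⟩ := hφclaim (I - i) i (by omega) j hj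
    refine ⟨le_trans ?_ hl, hu⟩
    have h1 : (1+abar)^(I-i) ≤ Real.exp (T*supF f/σ^2) := by
      calc (1+abar)^(I-i) ≤ (1+abar)^I :=
            pow_le_pow_right₀ (by linarith only [habar0]) (by omega)
        _ ≤ Real.exp ((I:ℝ)*abar) := pow_one_add_le_exp abar habar0 I
        _ = Real.exp (T*supF f/σ^2) := by
            congr 1
            rw [habardef, hΔtdef]
            field_simp
    have h2 : ε = elo / Real.exp (T*supF f/σ^2) := by
      rw [hεdef, helodef, eq_div_iff (Real.exp_ne_zero _), ← Real.exp_add]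
      congr 1
      ring
    rw [h2]
    gcongr
  -- bounds on the forward iterate ψh
  have hψb : ∀ i ≤ I, ∀ j ≤ J, 0 ≤ ψh i j ∧ ψh i j ≤ B := by
    intro i
    induction i with
    | zero =>
      intro _ j hj
      rw [hFinit j hj]
      have hφ0 := hφb 0 (Nat.zero_le I) j hj
      have hm0x := hm0 _ (hxmem j hj)
      constructor
      · exact div_nonneg hm0x (le_trans hε.le hφ0.1)
      · rw [hBdef]
        exact div_le_div₀ hSm0 (le_trans (le_abs_self _) (hm0le _ (hxmem j hj))) hε hφ0.1
    | succ k ih =>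
      intro hk j hj
      have hkI : k < I := by omega
      have ihk := ih (by omega)
      have ha : ∀ j' ≤ J, 0 ≤ Δt*(1/σ^2)*(-(f ((j':ℝ)/(J:ℝ)) (φh (k+1) j' * ψh (k+1) j'))) := by
        intro j' hj'
        exact mul_nonneg (mul_nonneg hΔt.le (by positivity))
          (neg_nonneg.mpr (hfneg _ (hxmem j' hj') _))
      have ha2 : ∀ j' ≤ J, Δt*(1/σ^2)*(-(f ((j':ℝ)/(J:ℝ)) (φh (k+1) j' * ψh (k+1) j'))) ≤ abar := by
        intro j' hj'
        have h1 : -(f ((j':ℝ)/(J:ℝ)) (φh (k+1) j' * ψh (k+1) j')) ≤ supF f :=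
          le_trans (neg_le_abs _) (hfle _ (hxmem j' hj') _)
        calc Δt*(1/σ^2)*(-(f ((j':ℝ)/(J:ℝ)) (φh (k+1) j' * ψh (k+1) j')))
            ≤ Δt*(1/σ^2)*(supF f) :=
              mul_le_mul_of_nonneg_left h1 (mul_nonneg hΔt.le (by positivity))
          _ = abar := by rw [habardef]; ring
      have hstepf : ∀ j' ≤ J, ψh (k+1) j' * (1 + 2*lam
            + Δt*(1/σ^2)*(-(f ((j':ℝ)/(J:ℝ)) (φh (k+1) j' * ψh (k+1) j'))))
          = ψh k j' + lam * ψh (k+1) (min (j'+1) J) + lam * ψh (k+1) (j'-1) := by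
        intro j' hj'
        exact fwd_step T σ I J hT.ne' hIne hJne _ _ _ _ _ (hFeq k hkI j' hj')
      constructor
      · have h0 := step_lower J lam hlam _ (ψh (k+1)) (ψh k) ha abar ha2 hstepf 0 le_rfl
          (fun j' hj' => (ihk j' hj').1) j hj
        simpa using h0
      · exact step_upper J lam hlam _ (ψh (k+1)) (ψh k) ha hstepf B hB0
          (fun j' hj' => (ihk j' hj').2) j hj
  -- energy quantities
  set P := gnormSq I J (fun i j => φh i j - φt i j) with hPdef
  set ηf : ℕ → ℕ → ℝ := (fun i j =>
                if i = 0 then 0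
                else
                  (ψt i j - ψt (i-1) j) / Δt
                    - σ^2/2 * ((ψt i (min (j+1) J) - 2*ψt i j + ψt i (j-1)) / (1/(J:ℝ))^2)
                    - (1/σ^2) * f ((j:ℝ)/(J:ℝ)) (φt i j * ψt i j) * ψt i j) with hηdef
  set H := gnormSq I J ηf with hHdef
  have hP0 : 0 ≤ P := gnormSq_nonneg _ _ _
  have hH0 : 0 ≤ H := gnormSq_nonneg _ _ _
  have hProw : ∀ i ≤ I, (1/((J:ℝ)+1)) * ∑ j ∈ Finset.range (J+1), (φh i j - φt i j)^2 ≤ P := by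
    intro i hi
    have h := gnormSq_row I J (fun i j => φh i j - φt i j) hi
    rw [hPdef]
    exact h
  have hHrow : ∀ i ≤ I, (1/((J:ℝ)+1)) * ∑ j ∈ Finset.range (J+1), (ηf i j)^2 ≤ H := by
    intro i hi
    have h := gnormSq_row I J ηf hi
    rw [hHdef]
    exact h
  have hηval : ∀ (i j : ℕ), ηf (i+1) j
      = (ψt (i+1) j - ψt i j) / Δt
        - σ^2/2 * ((ψt (i+1) (min (j+1) J) - 2*ψt (i+1) j + ψt (i+1) (j-1)) / (1/(J:ℝ))^2)
        - (1/σ^2) * f ((j:ℝ)/(J:ℝ)) (φt (i+1) j * ψt (i+1) j) * ψt (i+1) j := by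
    intro i j
    rw [hηdef]
    simp only [Nat.succ_ne_zero, if_false, Nat.add_sub_cancel]
  set E : ℕ → ℝ := fun i => (1/((J:ℝ)+1)) * ∑ j ∈ Finset.range (J+1), (ψh i j - ψt i j)^2
    with hEdef
  have hE0 : ∀ i, 0 ≤ E i := by
    intro i
    rw [hEdef]
    positivity
  set Q := 2*cp*P + H with hQdef
  have hQ0 : 0 ≤ Q := by
    rw [hQdef]
    have h1 : 0 ≤ 2*cp*P := mul_nonneg (by linarith only [hcp0]) hP0
    exact add_nonneg h1 hH0
  set ce := K*B^2/(2*σ^2) + 1/2 with hcedef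
  have h2ce : 2*ce ≤ c := by
    rw [hcedef, hcdef]
    have h1 : K*B^2/σ^2 ≤ K/σ^2*M := by
      calc K*B^2/σ^2 = (K/σ^2)*B^2 := by ring
        _ ≤ (K/σ^2)*M := mul_le_mul_of_nonneg_left hB2M hKσ
    have h1' : 2*(K*B^2/(2*σ^2)) = K*B^2/σ^2 := by ring
    linarith only [h1, h1']
  -- the one-step energy estimate
  have hstepE : ∀ i < I, E (i+1) * (1 - Δt*c) ≤ E i + Δt*Q := by
    intro i hiI
    have hi1 : i + 1 ≤ I := by omega
    -- pointwise inequality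
    have hper : ∀ j ∈ Finset.range (J+1),
        ((ψh (i+1) j - ψt (i+1) j)^2 - (ψh i j - ψt i j)^2)/2
          - lam * ((ψh (i+1) j - ψt (i+1) j) *
              ((ψh (i+1) (min (j+1) J) - ψt (i+1) (min (j+1) J))
                - 2*(ψh (i+1) j - ψt (i+1) j)
                + (ψh (i+1) (j-1) - ψt (i+1) (j-1))))
        ≤ Δt * (ce*(ψh (i+1) j - ψt (i+1) j)^2 + cp*(φh (i+1) j - φt (i+1) j)^2
            + (1/2)*(ηf (i+1) j)^2) := by
      intro j hjm
      have hj : j ≤ J := by have := Finset.mem_range.mp hjm; omega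
      have hxj := hxmem j hj
      -- scheme equation for ψh, multiplied out
      have hA := clearF Δt ((1/(J:ℝ))^2) (σ^2/2) (ψh (i+1) j) (ψh i j)
        (ψh (i+1) (min (j+1) J) - 2 * ψh (i+1) j + ψh (i+1) (j-1))
        ((1/σ^2) * f ((j:ℝ)/(J:ℝ)) (φh (i+1) j * ψh (i+1) j) * ψh (i+1) j)
        (ne_of_gt hΔt) (pow_ne_zero 2 (one_div_ne_zero hJne)) (hFeq i hiI j hj)
      -- residual equation for ψt, multiplied out
      have hB2 : ψt (i+1) j - ψt i j - (Δt*(σ^2/2)/((1/(J:ℝ))^2))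
            * (ψt (i+1) (min (j+1) J) - 2 * ψt (i+1) j + ψt (i+1) (j-1))
          = Δt * ((1/σ^2) * f ((j:ℝ)/(J:ℝ)) (φt (i+1) j * ψt (i+1) j) * ψt (i+1) j
              + ηf (i+1) j) := by
        refine clearF Δt ((1/(J:ℝ))^2) (σ^2/2) (ψt (i+1) j) (ψt i j)
          (ψt (i+1) (min (j+1) J) - 2 * ψt (i+1) j + ψt (i+1) (j-1))
          _ (ne_of_gt hΔt) (pow_ne_zero 2 (one_div_ne_zero hJne)) ?_
        rw [hηval i j]
        ring
      -- the exact error identity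
      have hid : (ψh (i+1) j - ψt (i+1) j) * ((ψh (i+1) j - ψt (i+1) j) - (ψh i j - ψt i j))
          - lam * ((ψh (i+1) j - ψt (i+1) j) *
              ((ψh (i+1) (min (j+1) J) - ψt (i+1) (min (j+1) J))
                - 2*(ψh (i+1) j - ψt (i+1) j)
                + (ψh (i+1) (j-1) - ψt (i+1) (j-1))))
          = Δt * ((1/σ^2) * (f ((j:ℝ)/(J:ℝ)) (φh (i+1) j * ψh (i+1) j) * ψh (i+1) j
                - f ((j:ℝ)/(J:ℝ)) (φt (i+1) j * ψt (i+1) j) * ψt (i+1) j)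
              * (ψh (i+1) j - ψt (i+1) j)
              - ηf (i+1) j * (ψh (i+1) j - ψt (i+1) j)) := by
        rw [hlamdef]
        linear_combination (ψh (i+1) j - ψt (i+1) j) * hA - (ψh (i+1) j - ψt (i+1) j) * hB2
      -- bound the bracket
      have hφtb := hφt (i+1) hi1 j hj
      have hψtb := hψt (i+1) hi1 j hj
      have hψhb := hψb (i+1) hi1 j hj
      have hnl := nonlin_bound_s10 σ K ε B hσ hε hB0 hK0
        (f ((j:ℝ)/(J:ℝ)) (φh (i+1) j * ψh (i+1) j))
        (f ((j:ℝ)/(J:ℝ)) (φt (i+1) j * ψt (i+1) j))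
        (φh (i+1) j) (φt (i+1) j) (ψh (i+1) j) (ψt (i+1) j)
        hφtb hψhb.1 hψhb.2
        (hfneg _ hxj _)
        (anti_mul_nonpos (hfmono _ hxj) _ _)
        (hK _ hxj _ _ (mul_nonneg (le_trans hε.le hφtb) hψtb)
          (mul_nonneg (le_trans hε.le (hφb (i+1) hi1 j hj).1) hψhb.1))
      have hηe : -(ηf (i+1) j * (ψh (i+1) j - ψt (i+1) j))
          ≤ ((ηf (i+1) j)^2 + (ψh (i+1) j - ψt (i+1) j)^2)/2 := by
        linarith only [sq_nonneg (ηf (i+1) j + (ψh (i+1) j - ψt (i+1) j))]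
      have hbr : (1/σ^2) * (f ((j:ℝ)/(J:ℝ)) (φh (i+1) j * ψh (i+1) j) * ψh (i+1) j
                - f ((j:ℝ)/(J:ℝ)) (φt (i+1) j * ψt (i+1) j) * ψt (i+1) j)
              * (ψh (i+1) j - ψt (i+1) j)
              - ηf (i+1) j * (ψh (i+1) j - ψt (i+1) j)
          ≤ ce*(ψh (i+1) j - ψt (i+1) j)^2 + cp*(φh (i+1) j - φt (i+1) j)^2
            + (1/2)*(ηf (i+1) j)^2 := by
        rw [hcedef, hcpdef]
        linarith only [hnl, hηe]
      calc ((ψh (i+1) j - ψt (i+1) j)^2 - (ψh i j - ψt i j)^2)/2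
            - lam * ((ψh (i+1) j - ψt (i+1) j) *
                ((ψh (i+1) (min (j+1) J) - ψt (i+1) (min (j+1) J))
                  - 2*(ψh (i+1) j - ψt (i+1) j)
                  + (ψh (i+1) (j-1) - ψt (i+1) (j-1))))
          ≤ (ψh (i+1) j - ψt (i+1) j) * ((ψh (i+1) j - ψt (i+1) j) - (ψh i j - ψt i j))
            - lam * ((ψh (i+1) j - ψt (i+1) j) *
                ((ψh (i+1) (min (j+1) J) - ψt (i+1) (min (j+1) J))
                  - 2*(ψh (i+1) j - ψt (i+1) j)
                  + (ψh (i+1) (j-1) - ψt (i+1) (j-1)))) := by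
            linarith only [sq_nonneg ((ψh (i+1) j - ψt (i+1) j) - (ψh i j - ψt i j))]
        _ = Δt * ((1/σ^2) * (f ((j:ℝ)/(J:ℝ)) (φh (i+1) j * ψh (i+1) j) * ψh (i+1) j
                - f ((j:ℝ)/(J:ℝ)) (φt (i+1) j * ψt (i+1) j) * ψt (i+1) j)
              * (ψh (i+1) j - ψt (i+1) j)
              - ηf (i+1) j * (ψh (i+1) j - ψt (i+1) j)) := hid
        _ ≤ Δt * (ce*(ψh (i+1) j - ψt (i+1) j)^2 + cp*(φh (i+1) j - φt (i+1) j)^2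
              + (1/2)*(ηf (i+1) j)^2) := mul_le_mul_of_nonneg_left hbr hΔt.le
    -- sum the pointwise inequalities
    have hsum := Finset.sum_le_sum hper
    -- identify left-hand side
    have hlapsum := lap_sum_nonpos J (fun j => ψh (i+1) j - ψt (i+1) j)
    have hLHS : ∑ j ∈ Finset.range (J+1),
        (((ψh (i+1) j - ψt (i+1) j)^2 - (ψh i j - ψt i j)^2)/2
          - lam * ((ψh (i+1) j - ψt (i+1) j) *
              ((ψh (i+1) (min (j+1) J) - ψt (i+1) (min (j+1) J))
                - 2*(ψh (i+1) j - ψt (i+1) j)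
                + (ψh (i+1) (j-1) - ψt (i+1) (j-1)))))
        = ((∑ j ∈ Finset.range (J+1), (ψh (i+1) j - ψt (i+1) j)^2)
            - (∑ j ∈ Finset.range (J+1), (ψh i j - ψt i j)^2))/2
          - lam * ∑ j ∈ Finset.range (J+1), ((ψh (i+1) j - ψt (i+1) j) *
              ((ψh (i+1) (min (j+1) J) - ψt (i+1) (min (j+1) J))
                - 2*(ψh (i+1) j - ψt (i+1) j)
                + (ψh (i+1) (j-1) - ψt (i+1) (j-1)))) := by
      rw [Finset.sum_sub_distrib, ← Finset.mul_sum, ← Finset.sum_div, Finset.sum_sub_distrib]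
    have hRHS : ∑ j ∈ Finset.range (J+1),
        Δt * (ce*(ψh (i+1) j - ψt (i+1) j)^2 + cp*(φh (i+1) j - φt (i+1) j)^2
            + (1/2)*(ηf (i+1) j)^2)
        = Δt * (ce * ∑ j ∈ Finset.range (J+1), (ψh (i+1) j - ψt (i+1) j)^2
            + cp * ∑ j ∈ Finset.range (J+1), (φh (i+1) j - φt (i+1) j)^2
            + (1/2) * ∑ j ∈ Finset.range (J+1), (ηf (i+1) j)^2) := by
      rw [← Finset.mul_sum]
      congr 1
      rw [Finset.sum_add_distrib, Finset.sum_add_distrib, ← Finset.mul_sum, ← Finset.mul_sum,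
        ← Finset.mul_sum]
    rw [hLHS, hRHS] at hsum
    -- drop the Laplacian term
    have hsum2 : ((∑ j ∈ Finset.range (J+1), (ψh (i+1) j - ψt (i+1) j)^2)
            - (∑ j ∈ Finset.range (J+1), (ψh i j - ψt i j)^2))/2
        ≤ Δt * (ce * ∑ j ∈ Finset.range (J+1), (ψh (i+1) j - ψt (i+1) j)^2
            + cp * ∑ j ∈ Finset.range (J+1), (φh (i+1) j - φt (i+1) j)^2
            + (1/2) * ∑ j ∈ Finset.range (J+1), (ηf (i+1) j)^2) := by
      linarith only [hsum, mul_nonpos_of_nonneg_of_nonpos hlam hlapsum]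
    -- normalize by (J+1)
    have hJ1 : (0:ℝ) < 1/((J:ℝ)+1) := by positivity
    have hsum3 := mul_le_mul_of_nonneg_left hsum2 hJ1.le
    have hEexp : ∀ i', E i' = (1/((J:ℝ)+1)) * ∑ j ∈ Finset.range (J+1), (ψh i' j - ψt i' j)^2 := by
      intro i'; rw [hEdef]
    have hPe : (1/((J:ℝ)+1)) * ∑ j ∈ Finset.range (J+1), (φh (i+1) j - φt (i+1) j)^2 ≤ P :=
      hProw (i+1) hi1
    have hHe : (1/((J:ℝ)+1)) * ∑ j ∈ Finset.range (J+1), (ηf (i+1) j)^2 ≤ H :=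
      hHrow (i+1) hi1
    -- assemble
    have key : E (i+1) - E i ≤ Δt * (2*ce * E (i+1) + 2*cp * P + H) := by
      rw [hEexp (i+1), hEexp i]
      have expand : (1/((J:ℝ)+1)) * (((∑ j ∈ Finset.range (J+1), (ψh (i+1) j - ψt (i+1) j)^2)
            - (∑ j ∈ Finset.range (J+1), (ψh i j - ψt i j)^2))/2)
          = ((1/((J:ℝ)+1)) * ∑ j ∈ Finset.range (J+1), (ψh (i+1) j - ψt (i+1) j)^2
            - (1/((J:ℝ)+1)) * ∑ j ∈ Finset.range (J+1), (ψh i j - ψt i j)^2)/2 := by ring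
      have expand2 : (1/((J:ℝ)+1)) * (Δt * (ce * ∑ j ∈ Finset.range (J+1), (ψh (i+1) j - ψt (i+1) j)^2
            + cp * ∑ j ∈ Finset.range (J+1), (φh (i+1) j - φt (i+1) j)^2
            + (1/2) * ∑ j ∈ Finset.range (J+1), (ηf (i+1) j)^2))
          = Δt * (ce * ((1/((J:ℝ)+1)) * ∑ j ∈ Finset.range (J+1), (ψh (i+1) j - ψt (i+1) j)^2)
            + cp * ((1/((J:ℝ)+1)) * ∑ j ∈ Finset.range (J+1), (φh (i+1) j - φt (i+1) j)^2)
            + (1/2) * ((1/((J:ℝ)+1)) * ∑ j ∈ Finset.range (J+1), (ηf (i+1) j)^2)) := by ring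
      rw [expand, expand2] at hsum3
      have hce0 : 0 ≤ ce := by
        rw [hcedef]
        have h9 : 0 ≤ K*B^2/(2*σ^2) := div_nonneg (mul_nonneg hK0 (sq_nonneg _)) (by positivity)
        linarith only [h9]
      have t1 : Δt * cp * ((1/((J:ℝ)+1)) * ∑ j ∈ Finset.range (J+1), (φh (i+1) j - φt (i+1) j)^2)
          ≤ Δt * cp * P := mul_le_mul_of_nonneg_left hPe (mul_nonneg hΔt.le hcp0)
      have t2 : Δt * (1/2) * ((1/((J:ℝ)+1)) * ∑ j ∈ Finset.range (J+1), (ηf (i+1) j)^2)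
          ≤ Δt * (1/2) * H := mul_le_mul_of_nonneg_left hHe (by positivity)
      linarith only [hsum3, t1, t2]
    -- conclude
    have hfinal : E (i+1) * (1 - Δt*(2*ce)) ≤ E i + Δt*Q := by
      rw [hQdef]
      linarith only [key]
    have hmono2 : E (i+1) * (1 - Δt*c) ≤ E (i+1) * (1 - Δt*(2*ce)) := by
      apply mul_le_mul_of_nonneg_left _ (hE0 (i+1))
      linarith only [mul_le_mul_of_nonneg_left h2ce hΔt.le]
    linarith only [hfinal, hmono2]
  -- Gronwall setup
  have hcond' : A < (I:ℝ)/T := hcond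
  have hΔtA : Δt * A < 1 := by
    rw [hΔtdef]
    have h1 : A * T < (I:ℝ) := (lt_div_iff₀ hT).mp hcond'
    rw [div_mul_eq_mul_div, div_lt_one hIpos]
    linarith only [h1]
  have hc0 : 0 ≤ c := by linarith only [hc1]
  have hden' : ν ≤ A*(1 - Δt*c) := by
    have h1 : Δt*A*c ≤ 1*c := mul_le_mul_of_nonneg_right hΔtA.le hc0
    have h2 : A = c + ν := hAdef
    have h3 : A*(1 - Δt*c) = A - Δt*A*c := by ring
    rw [h3]
    rw [h2] at h1 ⊢
    linarith only [h1]
  have hdenpos : 0 < 1 - Δt*c := by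
    by_contra hcon
    push_neg at hcon
    have h5 := mul_nonpos_of_nonneg_of_nonpos hA0.le hcon
    linarith only [hden', h5, hν]
  have hden : ν/A ≤ 1 - Δt*c := by
    rw [div_le_iff₀ hA0]
    linarith only [hden']
  set β := 1/(1-Δt*c) with hβdef
  have hβpos : 0 < β := by rw [hβdef]; positivity
  have hβ1 : 1 ≤ β := by
    rw [hβdef, le_div_iff₀ hdenpos]
    have h0 : 0 ≤ Δt*c := mul_nonneg hΔt.le hc0
    linarith only [h0]
  have hβexp : β ≤ Real.exp (Δt*c*A/ν) := by
    have hsplit : β = 1 + Δt*c/(1-Δt*c) := by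
      rw [hβdef]
      field_simp
      ring
    have hb1 : Δt*c/(1-Δt*c) ≤ Δt*c/(ν/A) :=
      div_le_div_of_nonneg_left (mul_nonneg hΔt.le hc0) (div_pos hν hA0) hden
    have hb2 : Δt*c/(ν/A) = Δt*c*A/ν := div_div_eq_mul_div _ _ _
    have hb3 : 1 + Δt*c*A/ν ≤ Real.exp (Δt*c*A/ν) := by
      linarith only [Real.add_one_le_exp (Δt*c*A/ν)]
    rw [hsplit]
    linarith only [hb1, hb2.le, hb2.ge, hb3]
  have hβI : β^I ≤ G := by
    calc β^I ≤ (Real.exp (Δt*c*A/ν))^I := pow_le_pow_left₀ hβpos.le hβexp I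
      _ = Real.exp ((I:ℝ)*(Δt*c*A/ν)) := by rw [← Real.exp_nat_mul]
      _ = G := by
          rw [hGdef]
          congr 1
          rw [hΔtdef]
          field_simp
  -- initial bound
  have hE0b : E 0 ≤ (Sm^2/ε^4)*P := by
    have hrow : ∀ j ∈ Finset.range (J+1),
        (ψh 0 j - ψt 0 j)^2 ≤ (Sm^2/ε^4)*(φh 0 j - φt 0 j)^2 := by
      intro j hjm
      have hj : j ≤ J := by have := Finset.mem_range.mp hjm; omega
      have hφh0 := (hφb 0 (Nat.zero_le I) j hj).1
      have hφt0 := hφt 0 (Nat.zero_le I) j hj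
      have hφhpos : 0 < φh 0 j := lt_of_lt_of_le hε hφh0
      have hφtpos : 0 < φt 0 j := lt_of_lt_of_le hε hφt0
      have hdd : ψh 0 j - ψt 0 j
          = m0 ((j:ℝ)/(J:ℝ)) * (φt 0 j - φh 0 j)/(φh 0 j * φt 0 j) := by
        rw [hFinit j hj, hψt0 j hj]
        field_simp
      rw [hdd, div_pow, mul_pow]
      rw [div_le_iff₀ (pow_pos (mul_pos hφhpos hφtpos) 2)]
      have hm2 : (m0 ((j:ℝ)/(J:ℝ)))^2 ≤ Sm^2 := by
        have h6 := hm0le _ (hxmem j hj)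
        calc (m0 ((j:ℝ)/(J:ℝ)))^2 = |m0 ((j:ℝ)/(J:ℝ))|^2 := (sq_abs _).symm
          _ ≤ Sm^2 := pow_le_pow_left₀ (abs_nonneg _) h6 2
      have hd2 : ε^4 ≤ (φh 0 j * φt 0 j)^2 := by
        have h1 : ε^2 ≤ φh 0 j * φt 0 j := by
          rw [sq]
          exact mul_le_mul hφh0 hφt0 hε.le (le_trans hε.le hφh0)
        have h4 := pow_le_pow_left₀ (by positivity : (0:ℝ) ≤ ε^2) h1 2
        calc ε^4 = (ε^2)^2 := by ring
          _ ≤ _ := h4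
      have hsw : (φt 0 j - φh 0 j)^2 = (φh 0 j - φt 0 j)^2 := by ring
      rw [hsw]
      calc (m0 ((j:ℝ)/(J:ℝ)))^2 * (φh 0 j - φt 0 j)^2
          ≤ Sm^2 * (φh 0 j - φt 0 j)^2 := mul_le_mul_of_nonneg_right hm2 (sq_nonneg _)
        _ = (Sm^2/ε^4) * (φh 0 j - φt 0 j)^2 * ε^4 := by
            field_simp
        _ ≤ Sm^2/ε^4*(φh 0 j - φt 0 j)^2 * (φh 0 j * φt 0 j)^2 := by
            apply mul_le_mul_of_nonneg_left hd2
            positivity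
    have hsum := Finset.sum_le_sum hrow
    have hEeq : E 0 = (1/((J:ℝ)+1)) * ∑ j ∈ Finset.range (J+1), (ψh 0 j - ψt 0 j)^2 := by
      rw [hEdef]
    rw [hEeq]
    calc (1/((J:ℝ)+1)) * ∑ j ∈ Finset.range (J+1), (ψh 0 j - ψt 0 j)^2
        ≤ (1/((J:ℝ)+1)) * ∑ j ∈ Finset.range (J+1), (Sm^2/ε^4)*(φh 0 j - φt 0 j)^2 := by
          apply mul_le_mul_of_nonneg_left hsum
          positivity
      _ = (Sm^2/ε^4) * ((1/((J:ℝ)+1)) * ∑ j ∈ Finset.range (J+1), (φh 0 j - φt 0 j)^2) := by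
          rw [← Finset.mul_sum]
          ring
      _ ≤ (Sm^2/ε^4)*P := by
          apply mul_le_mul_of_nonneg_left (hProw 0 (Nat.zero_le I))
          positivity
  -- Gronwall iteration
  have hclaim : ∀ i ≤ I, E i ≤ β^i * (E 0 + (i:ℝ)*Δt*Q) := by
    intro i
    induction i with
    | zero =>
      intro _
      simp
    | succ k ih =>
      intro hk
      have hkI : k < I := by omega
      have ihk := ih (by omega)
      have h1 : E (k+1) ≤ β * (E k + Δt*Q) := by
        have h2 := hstepE k hkI
        have h3 : E (k+1) = β * (E (k+1) * (1 - Δt*c)) := by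
          rw [hβdef]
          field_simp
        rw [h3]
        exact mul_le_mul_of_nonneg_left h2 hβpos.le
      have h4 : β * (E k + Δt*Q) ≤ β * (β^k * (E 0 + (k:ℝ)*Δt*Q) + Δt*Q) := by
        apply mul_le_mul_of_nonneg_left _ hβpos.le
        linarith only [ihk]
      have h5 : β * (β^k * (E 0 + (k:ℝ)*Δt*Q) + Δt*Q)
          ≤ β^(k+1) * (E 0 + ((k:ℕ)+1:ℝ)*Δt*Q) := by
        have hβk1 : 1 ≤ β^k := one_le_pow₀ hβ1
        have hQΔ : 0 ≤ Δt*Q := mul_nonneg hΔt.le hQ0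
        have hbb : β ≤ β^(k+1) := by
          calc β = β*1 := (mul_one β).symm
            _ ≤ β*β^k := mul_le_mul_of_nonneg_left hβk1 hβpos.le
            _ = β^(k+1) := by rw [pow_succ]; ring
        have e1 : β * (β^k * (E 0 + (k:ℝ)*Δt*Q) + Δt*Q)
            = β^(k+1) * (E 0 + (k:ℝ)*Δt*Q) + β*(Δt*Q) := by rw [pow_succ]; ring
        have e2 : β^(k+1) * (E 0 + ((k:ℕ)+1:ℝ)*Δt*Q)
            = β^(k+1) * (E 0 + (k:ℝ)*Δt*Q) + β^(k+1)*(Δt*Q) := by push_cast; ring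
        rw [e1, e2]
        have h7 := mul_le_mul_of_nonneg_right hbb hQΔ
        linarith only [h7]
      have hcast : ((k+1:ℕ):ℝ) = ((k:ℕ):ℝ) + 1 := by push_cast; ring
      calc E (k+1) ≤ β * (E k + Δt*Q) := h1
        _ ≤ β * (β^k * (E 0 + (k:ℝ)*Δt*Q) + Δt*Q) := h4
        _ ≤ β^(k+1) * (E 0 + ((k:ℕ)+1:ℝ)*Δt*Q) := h5
        _ = β^(k+1) * (E 0 + ((k+1:ℕ):ℝ)*Δt*Q) := by rw [hcast]
  -- final bound for each row
  have hrowbound : ∀ i ≤ I, E i ≤ G * ((Sm^2/ε^4)*P + T*Q) := by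
    intro i hi
    have h1 := hclaim i hi
    have hiT : (i:ℝ)*Δt ≤ T := by
      have hiI2 : (i:ℝ) ≤ (I:ℝ) := Nat.cast_le.mpr hi
      calc (i:ℝ)*Δt ≤ (I:ℝ)*Δt := mul_le_mul_of_nonneg_right hiI2 hΔt.le
        _ = T := by rw [hΔtdef]; field_simp
    have h2 : E 0 + (i:ℝ)*Δt*Q ≤ (Sm^2/ε^4)*P + T*Q := by
      have h2a : (i:ℝ)*Δt*Q ≤ T*Q := mul_le_mul_of_nonneg_right hiT hQ0
      exact add_le_add hE0b h2a
    have h3 : β^i ≤ β^I := pow_le_pow_right₀ hβ1 hi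
    have h4 : 0 ≤ E 0 + (i:ℝ)*Δt*Q := by
      have h4a : 0 ≤ (i:ℝ)*Δt*Q := mul_nonneg (mul_nonneg (Nat.cast_nonneg i) hΔt.le) hQ0
      linarith only [hE0 0, h4a]
    calc E i ≤ β^i * (E 0 + (i:ℝ)*Δt*Q) := h1
      _ ≤ β^I * ((Sm^2/ε^4)*P + T*Q) :=
          mul_le_mul h3 h2 h4 (pow_nonneg hβpos.le I)
      _ ≤ G * ((Sm^2/ε^4)*P + T*Q) :=
          mul_le_mul_of_nonneg_right hβI
            (add_nonneg (mul_nonneg (by positivity) hP0) (mul_nonneg hT.le hQ0))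
  -- conclude
  refine gnormSq_le I J _ _ fun i hi => ?_
  have hEi := hrowbound i hi
  have hrw : (1/((J:ℝ)+1)) * ∑ j ∈ Finset.range (J+1), ((ψh i j - ψt i j))^2 = E i := by
    rw [hEdef]
  show (1/((J:ℝ)+1)) * ∑ j ∈ Finset.range (J+1), ((ψh i j - ψt i j))^2 ≤ _
  calc (1/((J:ℝ)+1)) * ∑ j ∈ Finset.range (J+1), ((ψh i j - ψt i j))^2 = E i := hrw
    _ ≤ G * ((Sm^2/ε^4)*P + T*Q) := hEi
    _ ≤ (G*(Sm^2/ε^4 + 2*T*cp + T) + 1) * P + (G*(Sm^2/ε^4 + 2*T*cp + T) + 1) * H := by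
        rw [hQdef]
        have d1 : 0 ≤ (G*T + 1)*P :=
          mul_nonneg (by linarith only [mul_nonneg hG0 hT.le]) hP0
        have d2 : 0 ≤ (G*(Sm^2/ε^4) + 2*G*T*cp + 1)*H := by
          have e1 : 0 ≤ G*(Sm^2/ε^4) := mul_nonneg hG0 (by positivity)
          have e2 : 0 ≤ 2*G*T*cp :=
            mul_nonneg (mul_nonneg (by linarith only [hG0]) hT.le) hcp0
          exact mul_nonneg (by linarith only [e1, e2]) hH0
        linarith only [d1, d2]
end
end

section
/- Discrete mass evolution identity: let n ∈ ℕ and set m̂^{n+1}_{i,j} := φ̂^{n+1/2}_{i,j} ψ̂^{n+1}_{i,j}, where φ̂^{n+1/2}, ψ̂ⁿ, ψ̂^{n+1} are the discrete scheme iterates. Then for every 0 ≤ i ≤ I−1: (1/(J+1)) Σ_{j=0}^{J} m̂^{n+1}_{i+1,j} − (1/(J+1)) Σ_{j=0}^{J} m̂^{n+1}_{i,j} = (Δt/σ²)·(1/(J+1)) Σ_{j=0}^{J} ψ̂^{n+1}_{i+1,j} φ̂^{n+1/2}_{i,j} ( f(x_j, ψ̂^{n+1}_{i+1,j} φ̂^{n+1/2}_{i+1,j})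 − f(x_j, ψ̂ⁿ_{i,j} φ̂^{n+1/2}_{i,j}) ). -/
noncomputable section

open Real Filter

lemma green_aux (J : ℕ) (a b : ℕ → ℝ) :
    ∑ j ∈ Finset.range (J+1), a j * (b (min (j+1) J) - 2 * b j + b (j-1))
      = (∑ j ∈ Finset.range J, (a j * b (j+1) + a (j+1) * b j)) + a J * b J + a 0 * b 0
          - 2 * ∑ j ∈ Finset.range (J+1), a j * b j := by
  have h1 : ∑ j ∈ Finset.range (J+1), a j * b (min (j+1) J)
      = (∑ j ∈ Finset.range J, a j * b (j+1)) + a J * b J := by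
    rw [Finset.sum_range_succ]
    congr 1
    · refine Finset.sum_congr rfl fun j hj => ?_
      rw [min_eq_left (Nat.succ_le_of_lt (Finset.mem_range.mp hj))]
    · rw [min_eq_right (Nat.le_succ J)]
  have h2 : ∑ j ∈ Finset.range (J+1), a j * b (j-1)
      = (∑ j ∈ Finset.range J, a (j+1) * b j) + a 0 * b 0 := by
    rw [Finset.sum_range_succ']
    simp
  have h3 : ∑ j ∈ Finset.range (J+1), a j * (b (min (j+1) J) - 2 * b j + b (j-1))
      = ∑ j ∈ Finset.range (J+1), (a j * b (min (j+1) J) + a j * b (j-1) - 2 * (a j * b j)) :=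
    Finset.sum_congr rfl fun j _ => by ring
  rw [h3, Finset.sum_sub_distrib, Finset.sum_add_distrib, h1, h2, ← Finset.mul_sum, Finset.sum_add_distrib]
  ring

lemma green (J : ℕ) (a b : ℕ → ℝ) :
    ∑ j ∈ Finset.range (J+1), a j * (b (min (j+1) J) - 2 * b j + b (j-1))
      = ∑ j ∈ Finset.range (J+1), b j * (a (min (j+1) J) - 2 * a j + a (j-1)) := by
  rw [green_aux, green_aux]
  have e1 : ∑ j ∈ Finset.range J, (a j * b (j+1) + a (j+1) * b j)
      = ∑ j ∈ Finset.range J, (b j * a (j+1) + b (j+1) * a j) :=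
    Finset.sum_congr rfl fun j _ => by ring
  have e2 : ∑ j ∈ Finset.range (J+1), a j * b j = ∑ j ∈ Finset.range (J+1), b j * a j :=
    Finset.sum_congr rfl fun j _ => by ring
  rw [e1, e2]; ring

theorem stmt_13 (T σ : ℝ) (hT : 0 < T) (hσ : 0 < σ)
    (I J : ℕ) (hI : 1 ≤ I) (hJ : 1 ≤ J)
    (f : ℝ → ℝ → ℝ) (uT m0 : ℝ → ℝ)
    (hfc : ∀ x ∈ Set.Icc (0:ℝ) 1, Continuous (f x))
    (hfb : ∃ B : ℝ, ∀ x ∈ Set.Icc (0:ℝ) 1, ∀ ξ : ℝ, |f x ξ| ≤ B)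
    (hfneg : ∀ x ∈ Set.Icc (0:ℝ) 1, ∀ ξ : ℝ, f x ξ ≤ 0)
    (hfmono : ∀ x ∈ Set.Icc (0:ℝ) 1, Antitone (f x))
    (huTb : ∃ B : ℝ, ∀ x ∈ Set.Icc (0:ℝ) 1, |uT x| ≤ B)
    (hm0b : ∃ B : ℝ, ∀ x ∈ Set.Icc (0:ℝ) 1, |m0 x| ≤ B)
    (hm0 : ∀ x ∈ Set.Icc (0:ℝ) 1, 0 ≤ m0 x)
    (Φn Ψn Ψn1 : ℕ → ℕ → ℝ)
    (hB : BScheme T σ I J f uT Ψn Φn)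
    (hF : FScheme T σ I J f m0 Φn Ψn1) :
    ∀ i < I,
      (1/((J:ℝ)+1)) * ∑ j ∈ Finset.range (J+1), Φn (i+1) j * Ψn1 (i+1) j
        - (1/((J:ℝ)+1)) * ∑ j ∈ Finset.range (J+1), Φn i j * Ψn1 i j
      = (T/(I:ℝ))/σ^2 * ((1/((J:ℝ)+1)) * ∑ j ∈ Finset.range (J+1),
          Ψn1 (i+1) j * Φn i j *
            (f ((j:ℝ)/(J:ℝ)) (Ψn1 (i+1) j * Φn (i+1) j)
              - f ((j:ℝ)/(J:ℝ)) (Ψn i j * Φn i j))) := by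
  intro i hi
  obtain ⟨hBeq, -⟩ := hB
  obtain ⟨hFeq, -⟩ := hF
  have hI0 : (0:ℝ) < (I:ℝ) := by exact_mod_cast Nat.lt_of_lt_of_le Nat.zero_lt_one hI
  have hdt : (T/(I:ℝ)) ≠ 0 := ne_of_gt (div_pos hT hI0)
  have key : ∀ j ∈ Finset.range (J+1),
      Φn (i+1) j * Ψn1 (i+1) j - Φn i j * Ψn1 i j
        = (T/(I:ℝ)) * (σ^2/2) / (1/(J:ℝ))^2 *
            (Φn i j * (Ψn1 (i+1) (min (j+1) J) - 2 * Ψn1 (i+1) j + Ψn1 (i+1) (j-1))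
              - Ψn1 (i+1) j * (Φn i (min (j+1) J) - 2 * Φn i j + Φn i (j-1)))
          + (T/(I:ℝ))/σ^2 *
            (Ψn1 (i+1) j * Φn i j *
              (f ((j:ℝ)/(J:ℝ)) (Ψn1 (i+1) j * Φn (i+1) j)
                - f ((j:ℝ)/(J:ℝ)) (Ψn i j * Φn i j))) := by
    intro j hj
    have hj' : j ≤ J := Nat.lt_succ_iff.mp (Finset.mem_range.mp hj)
    have e1 := hBeq i hi j hj'
    have e2 := hFeq i hi j hj'
    rw [show Ψn1 (i+1) j * Φn (i+1) j = Φn (i+1) j * Ψn1 (i+1) j from mul_comm _ _,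
      show Ψn i j * Φn i j = Φn i j * Ψn i j from mul_comm _ _]
    have d1 : Φn (i+1) j - Φn i j
        = (-(1/σ^2) * f ((j:ℝ)/(J:ℝ)) (Φn i j * Ψn i j) * Φn i j
            - σ^2/2 * ((Φn i (min (j+1) J) - 2 * Φn i j + Φn i (j-1)) / (1/(J:ℝ))^2))
            * (T/(I:ℝ)) := by
      have h : (Φn (i+1) j - Φn i j) / (T/(I:ℝ))
          = -(1/σ^2) * f ((j:ℝ)/(J:ℝ)) (Φn i j * Ψn i j) * Φn i j
            - σ^2/2 * ((Φn i (min (j+1) J) - 2 * Φn i j + Φn i (j-1)) / (1/(J:ℝ))^2) := by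
        linarith [e1]
      calc Φn (i+1) j - Φn i j
          = (Φn (i+1) j - Φn i j) / (T/(I:ℝ)) * (T/(I:ℝ)) := (div_mul_cancel₀ _ hdt).symm
        _ = _ := by rw [h]
    have d2 : Ψn1 (i+1) j - Ψn1 i j
        = ((1/σ^2) * f ((j:ℝ)/(J:ℝ)) (Φn (i+1) j * Ψn1 (i+1) j) * Ψn1 (i+1) j
            + σ^2/2 * ((Ψn1 (i+1) (min (j+1) J) - 2 * Ψn1 (i+1) j + Ψn1 (i+1) (j-1)) / (1/(J:ℝ))^2))
            * (T/(I:ℝ)) := by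
      have h : (Ψn1 (i+1) j - Ψn1 i j) / (T/(I:ℝ))
          = (1/σ^2) * f ((j:ℝ)/(J:ℝ)) (Φn (i+1) j * Ψn1 (i+1) j) * Ψn1 (i+1) j
            + σ^2/2 * ((Ψn1 (i+1) (min (j+1) J) - 2 * Ψn1 (i+1) j + Ψn1 (i+1) (j-1)) / (1/(J:ℝ))^2) := by
        linarith [e2]
      calc Ψn1 (i+1) j - Ψn1 i j
          = (Ψn1 (i+1) j - Ψn1 i j) / (T/(I:ℝ)) * (T/(I:ℝ)) := (div_mul_cancel₀ _ hdt).symm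
        _ = _ := by rw [h]
    linear_combination Ψn1 (i+1) j * d1 + Φn i j * d2
  have S0 : ∑ j ∈ Finset.range (J+1),
      (Φn i j * (Ψn1 (i+1) (min (j+1) J) - 2 * Ψn1 (i+1) j + Ψn1 (i+1) (j-1))
        - Ψn1 (i+1) j * (Φn i (min (j+1) J) - 2 * Φn i j + Φn i (j-1))) = 0 := by
    rw [Finset.sum_sub_distrib]
    have hg : ∑ j ∈ Finset.range (J+1),
        Φn i j * (Ψn1 (i+1) (min (j+1) J) - 2 * Ψn1 (i+1) j + Ψn1 (i+1) (j-1))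
          = ∑ j ∈ Finset.range (J+1),
        Ψn1 (i+1) j * (Φn i (min (j+1) J) - 2 * Φn i j + Φn i (j-1)) :=
      green J (fun j => Φn i j) (fun j => Ψn1 (i+1) j)
    rw [hg, sub_self]
  have hsum : ∑ j ∈ Finset.range (J+1),
      (Φn (i+1) j * Ψn1 (i+1) j - Φn i j * Ψn1 i j)
        = (T/(I:ℝ)) * (σ^2/2) / (1/(J:ℝ))^2 * ∑ j ∈ Finset.range (J+1),
            (Φn i j * (Ψn1 (i+1) (min (j+1) J) - 2 * Ψn1 (i+1) j + Ψn1 (i+1) (j-1))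
              - Ψn1 (i+1) j * (Φn i (min (j+1) J) - 2 * Φn i j + Φn i (j-1)))
          + (T/(I:ℝ))/σ^2 * ∑ j ∈ Finset.range (J+1),
            (Ψn1 (i+1) j * Φn i j *
              (f ((j:ℝ)/(J:ℝ)) (Ψn1 (i+1) j * Φn (i+1) j)
                - f ((j:ℝ)/(J:ℝ)) (Ψn i j * Φn i j))) := by
    rw [Finset.sum_congr rfl key, Finset.sum_add_distrib, ← Finset.mul_sum, ← Finset.mul_sum]
  have hdiff : ∑ j ∈ Finset.range (J+1), Φn (i+1) j * Ψn1 (i+1) j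
      - ∑ j ∈ Finset.range (J+1), Φn i j * Ψn1 i j
        = (T/(I:ℝ))/σ^2 * ∑ j ∈ Finset.range (J+1),
            (Ψn1 (i+1) j * Φn i j *
              (f ((j:ℝ)/(J:ℝ)) (Ψn1 (i+1) j * Φn (i+1) j)
                - f ((j:ℝ)/(J:ℝ)) (Ψn i j * Φn i j))) := by
    rw [← Finset.sum_sub_distrib, hsum, S0, mul_zero, zero_add]
  linear_combination (1/((J:ℝ)+1)) * hdiff
end
end
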